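/- arXiv:1112.2760 — 7 statements merged into one kernel-verified Lean document; each statement's English description precedes it below -/
import Mathlib

section
/- Let $0<\alpha<1/2$ and $0<\gamma<1-2\alpha$. Then there exists a constant $K>0$ (depending only on $\alpha$ and $\gamma$) such that for every integer $N \geq 1$ and every real $x \geq 0$, $\sum_{k=N+1}^{\infty} \frac{\Gamma(k\gamma)}{\Gamma(k(1-2\alpha))} x^{k-1} \leq K \, \frac{x^{N} \, e^{2 x^{1/(1-2\alpha-\gamma)}}}{\Gamma((1-2\alpha-\gamma)N)}$. In particular the series on the left-hand side converges for every $x \geq 0$. -/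
open Real Set


lemma myGamma_le_one {x : ℝ} (h1 : 1 ≤ x) (h2 : x ≤ 2) : Gamma x ≤ 1 := by
  have hx : (0:ℝ) < x := by linarith
  have key := convexOn_log_Gamma.2 (mem_Ioi.mpr one_pos) (mem_Ioi.mpr two_pos)
    (by linarith : (0:ℝ) ≤ 2 - x) (by linarith : (0:ℝ) ≤ x - 1) (by ring)
  simp only [smul_eq_mul, Function.comp_apply, Gamma_one, Gamma_two, log_one] at key
  have hx' : (2 - x) * 1 + (x - 1) * 2 = x := by ring
  rw [hx'] at key
  have : log (Gamma x) ≤ 0 := by simpa using key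
  calc Gamma x = exp (log (Gamma x)) := (exp_log (Gamma_pos_of_pos hx)).symm
    _ ≤ exp 0 := exp_le_exp.mpr this
    _ = 1 := exp_zero

lemma myGamma_ge {x : ℝ} (hx : 0 < x) : exp (-2) ≤ Gamma x := by
  have main : ∀ y : ℝ, 1 ≤ y → exp (-2) ≤ Gamma y := by
    intro y hy
    have hy0 : (0:ℝ) < y := by linarith
    rw [Real.Gamma_eq_integral hy0]
    have hInt : MeasureTheory.IntegrableOn (fun t : ℝ => exp (-t) * t ^ (y - 1)) (Ioi 0) :=
      Real.GammaIntegral_convergent hy0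
    have hsub : Ioc (1:ℝ) 2 ⊆ Ioi 0 := fun t ht => lt_trans one_pos ht.1
    have step1 : exp (-2) ≤ ∫ t in Ioc (1:ℝ) 2, exp (-t) * t ^ (y - 1) := by
      have hc : (∫ _t in Ioc (1:ℝ) 2, exp (-2)) = exp (-2) := by
        simp [MeasureTheory.setIntegral_const, Real.volume_Ioc]
        norm_num
      rw [← hc]
      refine MeasureTheory.setIntegral_mono_on
        (MeasureTheory.integrableOn_const ?_)
        (hInt.mono_set hsub) measurableSet_Ioc ?_
      · rw [Real.volume_Ioc]; norm_num
      · intro t ht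
        have h1t : (1:ℝ) ≤ t := ht.1.le
        have ht2 : t ≤ 2 := ht.2
        have : exp (-2) ≤ exp (-t) := exp_le_exp.mpr (by linarith)
        have h2 : (1:ℝ) ≤ t ^ (y - 1) := Real.one_le_rpow h1t (by linarith)
        nlinarith [exp_pos (-t), exp_pos (-2)]
    have step2 : (∫ t in Ioc (1:ℝ) 2, exp (-t) * t ^ (y - 1))
        ≤ ∫ t in Ioi (0:ℝ), exp (-t) * t ^ (y - 1) := by
      refine MeasureTheory.setIntegral_mono_set hInt ?_ (HasSubset.Subset.eventuallyLE hsub)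
      filter_upwards [MeasureTheory.ae_restrict_mem measurableSet_Ioi] with t ht
      exact mul_nonneg (exp_pos _).le (Real.rpow_nonneg (le_of_lt ht) _)
    linarith
  rcases le_or_gt 1 x with h | h
  · exact main x h
  · have hx1 : Gamma (x + 1) = x * Gamma x := Real.Gamma_add_one hx.ne'
    have h1 : exp (-2) ≤ Gamma (x + 1) := main _ (by linarith)
    nlinarith [Gamma_pos_of_pos hx, exp_pos (-2)]

lemma myGamma_mono {x y : ℝ} (hx : 1 ≤ x) (hxy : x ≤ y) (hy : 2 ≤ y) : Gamma x ≤ Gamma y := by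
  have h2y : (1:ℝ) ≤ Gamma y := by
    rcases eq_or_lt_of_le hy with h | h
    · rw [← h, Real.Gamma_two]
    · have := (Real.Gamma_strictMonoOn_Ici (by norm_num : (2:ℝ) ∈ Ici 2)
        (le_of_lt h : (2:ℝ) ≤ y) h).le
      rwa [Real.Gamma_two] at this
  rcases le_or_gt 2 x with h | h
  · exact (Real.Gamma_strictMonoOn_Ici.monotoneOn h (le_trans h hxy) hxy)
  · exact le_trans (myGamma_le_one hx h.le) h2y


lemma myGamma_superadd {a b : ℝ} (ha : 1 ≤ a) (hb : 1 ≤ b) :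
    Gamma a * Gamma b ≤ Gamma (a + b) := by
  have hstep : ∀ c : ℝ, 1 ≤ c → Gamma c ≤ Gamma (c + 1) := by
    intro c hc
    have h := Real.Gamma_add_one (by linarith : c ≠ 0)
    nlinarith [Gamma_pos_of_pos (by linarith : (0:ℝ) < c)]
  rcases eq_or_lt_of_le ha with h | ha'
  · rw [← h, Real.Gamma_one, one_mul, add_comm]
    exact hstep b hb
  rcases eq_or_lt_of_le hb with h | hb'
  · rw [← h, Real.Gamma_one, mul_one]
    exact hstep a ha
  -- now 1 < a, 1 < b
  set c := a + b - 1 with hc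
  have hs : (0:ℝ) < a + b - 2 := by linarith
  have hc1 : (1:ℝ) < c := by simp [hc]; linarith
  have f1 : (Real.log ∘ Real.Gamma) 1 = 0 := by simp [Real.Gamma_one]
  have key : ∀ u v : ℝ, 1 < u → u = ((v-1)/(a+b-2)) * 1 + ((u-1)/(a+b-2)) * c →
      (v-1)/(a+b-2) + (u-1)/(a+b-2) = 1 →
      0 ≤ v - 1 →
      Real.log (Gamma u) ≤ ((u-1)/(a+b-2)) * Real.log (Gamma c) := by
    intro u v hu hcomb hsum hv
    have := convexOn_log_Gamma.2 (mem_Ioi.mpr one_pos) (mem_Ioi.mpr (by linarith : (0:ℝ) < c))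
      (by positivity : (0:ℝ) ≤ (v-1)/(a+b-2)) (by
        have : (0:ℝ) ≤ u - 1 := by linarith
        positivity) hsum
    simp only [smul_eq_mul, Function.comp_apply, Real.Gamma_one, log_one, mul_zero,
      zero_add] at this
    rwa [← hcomb] at this
  have ka : Real.log (Gamma a) ≤ ((a-1)/(a+b-2)) * Real.log (Gamma c) := by
    refine key a b ha' (by field_simp; ring) (by field_simp; ring) (by linarith)
  have kb : Real.log (Gamma b) ≤ ((b-1)/(a+b-2)) * Real.log (Gamma c) := by
    refine key b a hb' (by field_simp; ring) (by field_simp; ring) (by linarith)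
  have hsum2 : ((a-1)/(a+b-2)) + ((b-1)/(a+b-2)) = 1 := by field_simp; ring
  have hlog : Real.log (Gamma a) + Real.log (Gamma b) ≤ Real.log (Gamma c) := by
    calc Real.log (Gamma a) + Real.log (Gamma b)
        ≤ ((a-1)/(a+b-2)) * Real.log (Gamma c) + ((b-1)/(a+b-2)) * Real.log (Gamma c) := by
          linarith
      _ = Real.log (Gamma c) := by rw [← add_mul, hsum2, one_mul]
  have hcpos : (0:ℝ) < c := by linarith
  have hGc : Gamma c ≤ Gamma (a + b) := by
    have h := Real.Gamma_add_one hcpos.ne'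
    have : c + 1 = a + b := by simp [hc]
    rw [this] at h
    nlinarith [Gamma_pos_of_pos hcpos]
  calc Gamma a * Gamma b
      = exp (Real.log (Gamma a) + Real.log (Gamma b)) := by
        rw [exp_add, exp_log (Gamma_pos_of_pos (by linarith)),
          exp_log (Gamma_pos_of_pos (by linarith))]
    _ ≤ exp (Real.log (Gamma c)) := exp_le_exp.mpr hlog
    _ = Gamma c := exp_log (Gamma_pos_of_pos hcpos)
    _ ≤ Gamma (a + b) := hGc

lemma myGamma_small_le {ε t : ℝ} (hε : 0 < ε) (hε1 : ε ≤ 1) (ht : ε ≤ t) (ht2 : t ≤ 2) :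
    Gamma t ≤ 1 / ε := by
  rcases le_or_gt 1 t with h | h
  · calc Gamma t ≤ 1 := myGamma_le_one h ht2
      _ ≤ 1 / ε := by rw [le_div_iff₀ hε]; linarith
  · have ht0 : (0:ℝ) < t := lt_of_lt_of_le hε ht
    have h1 := Real.Gamma_add_one ht0.ne'
    have h2 : Gamma (t + 1) ≤ 1 := myGamma_le_one (by linarith) (by linarith)
    have hG : Gamma t = Gamma (t + 1) / t := by
      rw [h1]; field_simp
    rw [hG, div_le_div_iff₀ ht0 hε]
    nlinarith

lemma myGamma_submult {ε a b : ℝ} (hε : 0 < ε) (hε1 : ε ≤ 1) (ha : ε ≤ a) (hb : ε ≤ b) :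
    Gamma a * Gamma b ≤ (exp 2 / ε^2) * Gamma (a + b) := by
  have hC1 : (1:ℝ) ≤ exp 2 / ε^2 := by
    rw [le_div_iff₀ (by positivity)]
    nlinarith [Real.one_le_exp (by norm_num : (0:ℝ) ≤ 2), hε1, hε]
  have ha0 : (0:ℝ) < a := lt_of_lt_of_le hε ha
  have hb0 : (0:ℝ) < b := lt_of_lt_of_le hε hb
  have hGab : (0:ℝ) < Gamma (a + b) := Gamma_pos_of_pos (by linarith)
  have key : ∀ u v : ℝ, ε ≤ u → ε ≤ v → u < 1 →
      Gamma u * Gamma v ≤ (exp 2 / ε^2) * Gamma (u + v) := by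
    intro u v hu hv hu1
    have hu0 : (0:ℝ) < u := lt_of_lt_of_le hε hu
    have hv0 : (0:ℝ) < v := lt_of_lt_of_le hε hv
    have hGu : Gamma u ≤ 1 / ε := myGamma_small_le hε hε1 hu (by linarith)
    have hGuv : (0:ℝ) < Gamma (u + v) := Gamma_pos_of_pos (by linarith)
    rcases le_or_gt 2 v with h2 | h2
    · have hGv : Gamma v ≤ Gamma (u + v) := myGamma_mono (by linarith) (by linarith) (by linarith)
      have hGv0 : (0:ℝ) < Gamma v := Gamma_pos_of_pos hv0
      calc Gamma u * Gamma v ≤ (1/ε) * Gamma (u + v) := by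
            apply mul_le_mul hGu hGv hGv0.le (by positivity)
        _ ≤ (exp 2 / ε^2) * Gamma (u + v) := by
            apply mul_le_mul_of_nonneg_right _ hGuv.le
            rw [div_le_div_iff₀ hε (by positivity)]
            nlinarith [Real.one_le_exp (by norm_num : (0:ℝ) ≤ 2)]
    · have hGv : Gamma v ≤ 1 / ε := myGamma_small_le hε hε1 hv h2.le
      have hge : exp (-2) ≤ Gamma (u + v) := myGamma_ge (by linarith)
      have hexp : exp (-2) * exp 2 = 1 := by rw [← exp_add]; norm_num
      calc Gamma u * Gamma v ≤ (1/ε) * (1/ε) := by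
            apply mul_le_mul hGu hGv (Gamma_pos_of_pos hv0).le (by positivity)
        _ = 1 / ε^2 := by ring
        _ ≤ (exp 2 / ε^2) * Gamma (u + v) := by
            rw [div_mul_eq_mul_div, div_le_div_iff₀ (by positivity) (by positivity)]
            have h3 : (1:ℝ) ≤ exp 2 * Gamma (u + v) := by nlinarith [exp_pos (2:ℝ)]
            nlinarith [sq_nonneg ε, h3, hε]
  rcases lt_or_ge a 1 with h | h
  · exact key a b ha hb h
  rcases lt_or_ge b 1 with h' | h'
  · rw [mul_comm, add_comm]
    exact key b a hb ha h'
  · calc Gamma a * Gamma b ≤ Gamma (a + b) := myGamma_superadd h h'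
      _ ≤ (exp 2 / ε^2) * Gamma (a + b) := le_mul_of_one_le_left hGab.le hC1


lemma myPoly_nat : ∀ m : ℕ, 8^m * ((m+2) * (m+3)) ≤ 100 * 9^m := by
  intro m
  induction m with
  | zero => norm_num
  | succ n ih =>
    rcases lt_or_ge n 14 with h | h
    · interval_cases n <;> norm_num
    · have h1 : 8^(n+1) * ((n+1+2) * (n+1+3)) = 8 * (8^n * ((n+3) * (n+4))) := by ring
      have h2 : 8 * ((n+3) * (n+4)) ≤ 9 * ((n+2) * (n+3)) := by nlinarith
      calc 8^(n+1) * ((n+1+2) * (n+1+3)) = 8^n * (8 * ((n+3) * (n+4))) := by ring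
        _ ≤ 8^n * (9 * ((n+2) * (n+3))) := Nat.mul_le_mul_left _ h2
        _ = 9 * (8^n * ((n+2) * (n+3))) := by ring
        _ ≤ 9 * (100 * 9^n) := Nat.mul_le_mul_left _ ih
        _ = 100 * 9^(n+1) := by ring

lemma myPoly (m : ℕ) : ((m:ℝ)+2) * ((m:ℝ)+3) ≤ 100 * (9/8:ℝ)^m := by
  have h := myPoly_nat m
  have h' : ((8:ℝ)^m * ((m+2) * (m+3))) ≤ 100 * 9^m := by exact_mod_cast h
  have h8 : (0:ℝ) < 8^m := by positivity
  rw [div_pow, ← mul_div_assoc, le_div_iff₀ h8]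
  calc ((m:ℝ)+2) * ((m:ℝ)+3) * 8^m = (8:ℝ)^m * ((m+2) * (m+3)) := by ring
    _ ≤ 100 * 9^m := h'

lemma mySeries_term {δ z : ℝ} (hδ : 0 < δ) (hδ1 : δ ≤ 1) (hz : 0 < z) (k : ℕ) :
    z ^ (δ * k) ≤ (800/3) * ((3/4:ℝ) ^ δ)^k * exp (2 * z) * Gamma (δ * (k+1)) := by
  set m : ℕ := ⌊δ * k⌋₊ with hm
  have hdk : (0:ℝ) ≤ δ * k := by positivity
  have hm1 : (m:ℝ) ≤ δ * k := Nat.floor_le hdk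
  have hm2 : δ * k < m + 1 := Nat.lt_floor_add_one _
  -- Step A : z ^ (δ k) ≤ (1+z) * z^m
  have stepA : z ^ (δ * k) ≤ (1 + z) * z ^ m := by
    rcases le_or_gt 1 z with h | h
    · have : z ^ (δ * k) ≤ z ^ ((m:ℝ) + 1) :=
        Real.rpow_le_rpow_of_exponent_le h hm2.le
      have he : z ^ ((m:ℝ) + 1) = z ^ m * z := by
        rw [Real.rpow_add hz, Real.rpow_natCast, Real.rpow_one]
      nlinarith [pow_nonneg hz.le m]
    · have : z ^ (δ * k) ≤ z ^ (m:ℝ) :=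
        Real.rpow_le_rpow_of_exponent_ge hz h.le hm1
      rw [Real.rpow_natCast] at this
      nlinarith [pow_nonneg hz.le m]
  -- Step B : m ! ≤ (m+2)*(m+3) * Gamma (δ (k+1))
  have hG0 : (0:ℝ) < Gamma (δ * (k+1)) := Gamma_pos_of_pos (by positivity)
  have stepB : (Nat.factorial m : ℝ) ≤ ((m:ℝ)+2) * ((m:ℝ)+3) * Gamma (δ * (k+1)) := by
    have hs : (0:ℝ) < δ * (k+1) := by positivity
    have e1 : Gamma (δ * (k+1) + 1) = (δ * (k+1)) * Gamma (δ * (k+1)) :=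
      Real.Gamma_add_one hs.ne'
    have e2 : Gamma (δ * (k+1) + 2) = (δ * (k+1) + 1) * ((δ * (k+1)) * Gamma (δ * (k+1))) := by
      have := Real.Gamma_add_one (by positivity : (δ * (k+1) + 1) ≠ 0)
      rw [← e1, ← this]; ring_nf
    have hmono : (Nat.factorial m : ℝ) ≤ Gamma (δ * (k+1) + 2) := by
      rw [← Real.Gamma_nat_eq_factorial]
      refine myGamma_mono (by exact_mod_cast Nat.one_le_iff_ne_zero.mpr (Nat.succ_ne_zero m)) ?_ (by nlinarith)
      have : (m:ℝ) ≤ δ * k + δ * 1 := by linarith [mul_nonneg hδ.le (by norm_num : (0:ℝ) ≤ 1)]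
      push_cast
      nlinarith
    have hfac : δ * (k+1) + 1 ≤ (m:ℝ) + 3 := by nlinarith
    have hfac2 : δ * (k+1) ≤ (m:ℝ) + 2 := by nlinarith
    calc (Nat.factorial m : ℝ) ≤ Gamma (δ * (k+1) + 2) := hmono
      _ = (δ * (k+1) + 1) * ((δ * (k+1)) * Gamma (δ * (k+1))) := e2
      _ ≤ ((m:ℝ)+3) * (((m:ℝ)+2) * Gamma (δ * (k+1))) := by
          apply mul_le_mul hfac _ (by positivity) (by positivity)
          exact mul_le_mul_of_nonneg_right hfac2 hG0.le
      _ = ((m:ℝ)+2) * ((m:ℝ)+3) * Gamma (δ * (k+1)) := by ring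
  -- Step C exponential bounds
  have hC1 : (1 + z) ≤ 2 * exp (z/2) := by
    nlinarith [Real.add_one_le_exp (z/2)]
  have hC2 : z ^ m ≤ (2/3:ℝ)^m * exp (3*z/2) * Nat.factorial m := by
    have h := Real.pow_div_factorial_le_exp (3*z/2) (by positivity : (0:ℝ) ≤ 3*z/2) m
    have hfac : (0:ℝ) < Nat.factorial m := by exact_mod_cast Nat.factorial_pos m
    rw [div_le_iff₀ hfac] at h
    have he : (3*z/2)^m = (3/2:ℝ)^m * z^m := by rw [← mul_pow]; ring_nf
    rw [he] at h
    have h32 : (0:ℝ) < (3/2:ℝ)^m := by positivity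
    calc z ^ m = ((2/3:ℝ)^m * (3/2:ℝ)^m) * z^m := by
          rw [← mul_pow]; norm_num
      _ = (2/3:ℝ)^m * ((3/2:ℝ)^m * z^m) := by ring
      _ ≤ (2/3:ℝ)^m * (exp (3*z/2) * Nat.factorial m) := by
          apply mul_le_mul_of_nonneg_left h (by positivity)
      _ = (2/3:ℝ)^m * exp (3*z/2) * Nat.factorial m := by ring
  -- combine
  have comb : z ^ (δ * k) ≤ 200 * (3/4:ℝ)^m * exp (2*z) * Gamma (δ * (k+1)) := by
    have hpoly := myPoly m
    have e34 : (2/3:ℝ)^m * ((9/8:ℝ)^m) = (3/4:ℝ)^m := by rw [← mul_pow]; norm_num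
    have hexp : exp (z/2) * exp (3*z/2) = exp (2*z) := by
      rw [← Real.exp_add]; ring_nf
    calc z ^ (δ * k) ≤ (1 + z) * z ^ m := stepA
      _ ≤ (2 * exp (z/2)) * ((2/3:ℝ)^m * exp (3*z/2) * Nat.factorial m) := by
          apply mul_le_mul hC1 hC2 (by positivity) (by positivity)
      _ ≤ (2 * exp (z/2)) * ((2/3:ℝ)^m * exp (3*z/2) *
            (((m:ℝ)+2) * ((m:ℝ)+3) * Gamma (δ * (k+1)))) := by
          apply mul_le_mul_of_nonneg_left _ (by positivity)
          apply mul_le_mul_of_nonneg_left stepB (by positivity)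
      _ ≤ (2 * exp (z/2)) * ((2/3:ℝ)^m * exp (3*z/2) *
            ((100 * (9/8:ℝ)^m) * Gamma (δ * (k+1)))) := by
          apply mul_le_mul_of_nonneg_left _ (by positivity)
          apply mul_le_mul_of_nonneg_left _ (by positivity)
          exact mul_le_mul_of_nonneg_right hpoly hG0.le
      _ = 200 * ((2/3:ℝ)^m * (9/8:ℝ)^m) * (exp (z/2) * exp (3*z/2)) * Gamma (δ * (k+1)) := by
          ring
      _ = 200 * (3/4:ℝ)^m * exp (2*z) * Gamma (δ * (k+1)) := by rw [e34, hexp]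
  -- (3/4)^m ≤ (4/3) * ((3/4)^δ)^k
  have hlast : ((3/4:ℝ))^m ≤ (4/3) * ((3/4:ℝ)^δ)^k := by
    have h1 : ((3/4:ℝ))^m = (3/4:ℝ) ^ (m:ℝ) := (Real.rpow_natCast _ m).symm
    have h2 : (3/4:ℝ) ^ (m:ℝ) ≤ (3/4:ℝ) ^ (δ * k - 1) := by
      apply Real.rpow_le_rpow_of_exponent_ge (by norm_num) (by norm_num)
      linarith
    have h3 : (3/4:ℝ) ^ (δ * k - 1) = (4/3) * (3/4:ℝ) ^ (δ * k) := by
      rw [Real.rpow_sub (by norm_num), Real.rpow_one]; ring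
    have h4 : (3/4:ℝ) ^ (δ * k) = ((3/4:ℝ)^δ)^k := by
      rw [← Real.rpow_natCast ((3/4:ℝ)^δ) k, ← Real.rpow_mul (by norm_num)]
    rw [h1, ← h4, ← h3]
    exact h2
  calc z ^ (δ * k) ≤ 200 * (3/4:ℝ)^m * exp (2*z) * Gamma (δ * (k+1)) := comb
    _ ≤ 200 * ((4/3) * ((3/4:ℝ)^δ)^k) * exp (2*z) * Gamma (δ * (k+1)) := by
        apply mul_le_mul_of_nonneg_right _ hG0.le
        apply mul_le_mul_of_nonneg_right _ (exp_pos _).le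
        exact mul_le_mul_of_nonneg_left hlast (by norm_num)
    _ = (800/3) * ((3/4:ℝ) ^ δ)^k * exp (2 * z) * Gamma (δ * (k+1)) := by ring


/-- Tail estimate for the Mittag-Leffler-type series `∑_{k≥N+1} Γ(kγ)/Γ(k(1-2α)) x^{k-1}`. -/
theorem stmt_0 (α γ : ℝ) (hα : 0 < α) (hα' : α < 1/2) (hγ : 0 < γ) (hγ' : γ < 1 - 2*α) :
    ∃ K : ℝ, 0 < K ∧ ∀ N : ℕ, 1 ≤ N → ∀ x : ℝ, 0 ≤ x →
      Summable (fun k : ℕ =>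
        Gamma ((N+1+k : ℕ) * γ) / Gamma ((N+1+k : ℕ) * (1 - 2*α)) * x ^ (N+k)) ∧
      ∑' k : ℕ, Gamma ((N+1+k : ℕ) * γ) / Gamma ((N+1+k : ℕ) * (1 - 2*α)) * x ^ (N+k)
        ≤ K * (x ^ N * exp (2 * x ^ ((1:ℝ)/(1 - 2*α - γ))) / Gamma ((1 - 2*α - γ) * N)) := by
  set δ : ℝ := 1 - 2*α - γ with hδeq
  have hδ0 : 0 < δ := by simp only [hδeq]; linarith
  have hδ1 : δ ≤ 1 := by simp only [hδeq]; linarith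
  set ε : ℝ := min γ δ with hεeq
  have hε0 : 0 < ε := lt_min hγ hδ0
  have hε1 : ε ≤ 1 := le_trans (min_le_right _ _) hδ1
  set Csup : ℝ := exp 2 / ε^2 with hCeq
  have hCpos : 0 < Csup := by positivity
  set ρ : ℝ := (3/4:ℝ) ^ δ with hρeq
  have hρ0 : 0 < ρ := Real.rpow_pos_of_pos (by norm_num) _
  have hρ1 : ρ < 1 := Real.rpow_lt_one (by norm_num) (by norm_num) hδ0
  have hKpos : 0 < Csup^2 * (800/3) * (1-ρ)⁻¹ :=
    mul_pos (mul_pos (pow_pos hCpos 2) (by norm_num)) (inv_pos.mpr (sub_pos.mpr hρ1))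
  refine ⟨Csup^2 * (800/3) * (1-ρ)⁻¹, hKpos, ?_⟩
  intro N hN x hx
  have hγδ : γ + δ = 1 - 2*α := by rw [hδeq]; ring
  have hNR : (1:ℝ) ≤ (N:ℝ) := by exact_mod_cast hN
  have hδN : (0:ℝ) < δ * N := mul_pos hδ0 (by linarith)
  have hG1 : (0:ℝ) < Gamma (δ * N) := Gamma_pos_of_pos hδN
  set c : ℝ := Csup^2 * (800/3) * (x ^ N * exp (2 * x ^ ((1:ℝ)/δ)) / Gamma (δ * N)) with hceq
  have hcnonneg : 0 ≤ c := by
    apply mul_nonneg (by positivity)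
    apply div_nonneg _ hG1.le
    positivity
  -- per-term bound
  have hle : ∀ k : ℕ, Gamma ((N+1+k : ℕ) * γ) / Gamma ((N+1+k : ℕ) * (1 - 2*α)) * x ^ (N+k)
      ≤ c * ρ ^ k := by
    intro k
    have hn1 : (1:ℝ) ≤ ((N+1+k : ℕ) : ℝ) := by
      have : 1 ≤ N+1+k := by omega
      exact_mod_cast this
    have hnpos : (0:ℝ) < ((N+1+k : ℕ) : ℝ) := lt_of_lt_of_le one_pos hn1
    have hApos : (0:ℝ) < Gamma (((N+1+k : ℕ) : ℝ) * γ) :=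
      Gamma_pos_of_pos (mul_pos hnpos hγ)
    have hBpos : (0:ℝ) < Gamma (((N+1+k : ℕ) : ℝ) * (1 - 2*α)) :=
      Gamma_pos_of_pos (mul_pos hnpos (by linarith))
    rcases hx.eq_or_lt with rfl | hx0
    · have hNk : N + k ≠ 0 := by omega
      rw [zero_pow hNk, mul_zero]
      positivity
    -- x > 0 case
    have hz : (0:ℝ) < x ^ ((1:ℝ)/δ) := Real.rpow_pos_of_pos hx0 _
    have hDpos : (0:ℝ) < Gamma (((N+1+k : ℕ) : ℝ) * δ) :=
      Gamma_pos_of_pos (mul_pos hnpos hδ0)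
    have hG2 : (0:ℝ) < Gamma (δ * (k+1)) := Gamma_pos_of_pos (by positivity)
    have h1 : Gamma (((N+1+k : ℕ) : ℝ) * γ) * Gamma (((N+1+k : ℕ) : ℝ) * δ)
        ≤ Csup * Gamma (((N+1+k : ℕ) : ℝ) * (1 - 2*α)) := by
      have := myGamma_submult hε0 hε1
        (show ε ≤ ((N+1+k : ℕ) : ℝ) * γ from
          (min_le_left γ δ).trans (le_mul_of_one_le_left hγ.le hn1))
        (show ε ≤ ((N+1+k : ℕ) : ℝ) * δ from
          (min_le_right γ δ).trans (le_mul_of_one_le_left hδ0.le hn1))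
      have he : ((N+1+k : ℕ) : ℝ) * γ + ((N+1+k : ℕ) : ℝ) * δ
          = ((N+1+k : ℕ) : ℝ) * (1 - 2*α) := by rw [← mul_add, hγδ]
      rwa [he] at this
    have h2 : Gamma (δ * N) * Gamma (δ * (k+1))
        ≤ Csup * Gamma (((N+1+k : ℕ) : ℝ) * δ) := by
      have := myGamma_submult hε0 hε1
        (show ε ≤ δ * N from
          (min_le_right γ δ).trans (le_mul_of_one_le_right hδ0.le hNR))
        (show ε ≤ δ * (k+1) from
          (min_le_right γ δ).trans (le_mul_of_one_le_right hδ0.le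
            (by have h0 : (0:ℝ) ≤ (k:ℝ) := Nat.cast_nonneg k
                linarith : (1:ℝ) ≤ (k:ℝ)+1)))
      have he : δ * N + δ * (k+1) = ((N+1+k : ℕ) : ℝ) * δ := by push_cast; ring
      rwa [he] at this
    have h3 : x ^ k ≤ (800/3) * ρ ^ k * exp (2 * x ^ ((1:ℝ)/δ)) * Gamma (δ * (k+1)) := by
      have hst := mySeries_term hδ0 hδ1 hz k
      have hzz : (x ^ ((1:ℝ)/δ)) ^ (δ * k) = x ^ k := by
        rw [← Real.rpow_mul hx]
        have : (1:ℝ)/δ * (δ * k) = (k:ℝ) := by field_simp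
        rw [this, Real.rpow_natCast]
      rwa [hzz] at hst
    -- combine
    have hAB : Gamma (((N+1+k : ℕ) : ℝ) * γ) / Gamma (((N+1+k : ℕ) : ℝ) * (1 - 2*α))
        ≤ Csup / Gamma (((N+1+k : ℕ) : ℝ) * δ) :=
      (div_le_div_iff₀ hBpos hDpos).mpr (by linarith)
    have hD2 : Csup / Gamma (((N+1+k : ℕ) : ℝ) * δ)
        ≤ Csup^2 / (Gamma (δ * N) * Gamma (δ * (k+1))) := by
      rw [div_le_div_iff₀ hDpos (mul_pos hG1 hG2)]
      calc Csup * (Gamma (δ * N) * Gamma (δ * (k+1)))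
          ≤ Csup * (Csup * Gamma (((N+1+k : ℕ) : ℝ) * δ)) :=
            mul_le_mul_of_nonneg_left h2 hCpos.le
        _ = Csup^2 * Gamma (((N+1+k : ℕ) : ℝ) * δ) := by ring
    have hxNk : x ^ (N+k) = x ^ N * x ^ k := pow_add x N k
    calc Gamma (((N+1+k : ℕ) : ℝ) * γ) / Gamma (((N+1+k : ℕ) : ℝ) * (1 - 2*α)) * x ^ (N+k)
        ≤ (Csup^2 / (Gamma (δ * N) * Gamma (δ * (k+1)))) * (x ^ N * x ^ k) := by
          rw [hxNk]
          exact mul_le_mul (hAB.trans hD2) le_rfl (by positivity)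
            (le_of_lt (by positivity))
      _ ≤ (Csup^2 / (Gamma (δ * N) * Gamma (δ * (k+1))))
            * (x ^ N * ((800/3) * ρ ^ k * exp (2 * x ^ ((1:ℝ)/δ)) * Gamma (δ * (k+1)))) := by
          apply mul_le_mul_of_nonneg_left _ (by positivity)
          exact mul_le_mul_of_nonneg_left h3 (by positivity)
      _ = c * ρ ^ k := by
          rw [hceq]
          field_simp
  have hnonneg : ∀ k : ℕ, 0 ≤ Gamma ((N+1+k : ℕ) * γ) / Gamma ((N+1+k : ℕ) * (1 - 2*α))
      * x ^ (N+k) := by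
    intro k
    have hn1 : (1:ℝ) ≤ ((N+1+k : ℕ) : ℝ) := by
      have : 1 ≤ N+1+k := by omega
      exact_mod_cast this
    have hnpos : (0:ℝ) < ((N+1+k : ℕ) : ℝ) := lt_of_lt_of_le one_pos hn1
    have hApos : (0:ℝ) < Gamma (((N+1+k : ℕ) : ℝ) * γ) :=
      Gamma_pos_of_pos (mul_pos hnpos hγ)
    have hBpos : (0:ℝ) < Gamma (((N+1+k : ℕ) : ℝ) * (1 - 2*α)) :=
      Gamma_pos_of_pos (mul_pos hnpos (by linarith))
    positivity
  have hgeo : Summable (fun k : ℕ => c * ρ ^ k) :=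
    (summable_geometric_of_lt_one hρ0.le hρ1).mul_left c
  have hsummable : Summable (fun k : ℕ =>
      Gamma ((N+1+k : ℕ) * γ) / Gamma ((N+1+k : ℕ) * (1 - 2*α)) * x ^ (N+k)) :=
    Summable.of_nonneg_of_le hnonneg hle hgeo
  refine ⟨hsummable, ?_⟩
  calc ∑' k : ℕ, Gamma ((N+1+k : ℕ) * γ) / Gamma ((N+1+k : ℕ) * (1 - 2*α)) * x ^ (N+k)
      ≤ ∑' k : ℕ, c * ρ ^ k := Summable.tsum_le_tsum hle hsummable hgeo
    _ = c * (1-ρ)⁻¹ := by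
        rw [tsum_mul_left, tsum_geometric_of_lt_one hρ0.le hρ1]
    _ = Csup^2 * (800/3) * (1-ρ)⁻¹
          * (x ^ N * exp (2 * x ^ ((1:ℝ)/δ)) / Gamma (δ * N)) := by
        rw [hceq]; ring
end

section
/- Let $0<\alpha<1/2$ and $0<\gamma<1-2\alpha$. Then there exists a constant $K>0$ (depending only on $\alpha$ and $\gamma$) such that for every real $x \geq 0$, $\sum_{k=1}^{\infty} \frac{\Gamma(k\gamma)}{\Gamma(k(1-2\alpha))} x^{k-1} \leq K \, e^{2 x^{1/(1-2\alpha-\gamma)}}$. In particular the series on the left-hand side converges for every $x \geq 0$. -/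
open Real

open Set MeasureTheory

lemma gamma_lb (s t : ℝ) (hs : 0 ≤ s) (ht : 0 < t) :
    t ^ s * Real.exp (-t) ≤ Real.Gamma (s + 1) := by
  rw [Real.Gamma_eq_integral (by linarith : (0:ℝ) < s + 1)]
  have hint : IntegrableOn (fun x : ℝ => Real.exp (-x) * x ^ (s + 1 - 1)) (Ioi 0) :=
    Real.GammaIntegral_convergent (by linarith)
  simp only [add_sub_cancel_right] at hint ⊢
  have hint1 : IntegrableOn (fun x : ℝ => Real.exp (-x) * t ^ s) (Ioi t) := by
    have := (exp_neg_integrableOn_Ioi t (by norm_num : (0:ℝ) < 1)).mul_const (t ^ s)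
    simp only [neg_mul, one_mul] at this
    exact this
  have h1 : t ^ s * Real.exp (-t) = ∫ x in Ioi t, Real.exp (-x) * t ^ s := by
    rw [MeasureTheory.integral_mul_const, integral_exp_neg_Ioi]; ring
  have h2 : (∫ x in Ioi t, Real.exp (-x) * t ^ s) ≤ ∫ x in Ioi t, Real.exp (-x) * x ^ s := by
    refine setIntegral_mono_on hint1 (hint.mono_set (Ioi_subset_Ioi ht.le)) measurableSet_Ioi ?_
    intro x hx
    exact mul_le_mul_of_nonneg_left
      (Real.rpow_le_rpow ht.le (le_of_lt hx) hs) (Real.exp_pos _).le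
  have h3 : (∫ x in Ioi t, Real.exp (-x) * x ^ s) ≤ ∫ x in Ioi 0, Real.exp (-x) * x ^ s := by
    refine setIntegral_mono_set hint ?_
      (HasSubset.Subset.eventuallyLE (Ioi_subset_Ioi ht.le))
    filter_upwards [ae_restrict_mem measurableSet_Ioi] with x hx
    exact mul_nonneg (Real.exp_pos _).le (Real.rpow_nonneg (le_of_lt hx) _)
  linarith [h1 ▸ h2, h3]

lemma logGamma_shift (a a' b : ℝ) (ha : 0 < a) (haa : a ≤ a') (hb : 0 < b) :
    Real.Gamma a' * Real.Gamma (a + b) ≤ Real.Gamma a * Real.Gamma (a' + b) := by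
  rcases eq_or_lt_of_le haa with rfl | hlt
  · exact le_rfl
  set f : ℝ → ℝ := Real.log ∘ Real.Gamma with hf
  have hconv := Real.convexOn_log_Gamma
  have hma : a ∈ Ioi (0:ℝ) := ha
  have hma' : a' ∈ Ioi (0:ℝ) := lt_trans ha hlt
  have hmab : a + b ∈ Ioi (0:ℝ) := by simp [Ioi]; linarith
  have hma'b : a' + b ∈ Ioi (0:ℝ) := by simp [Ioi]; linarith
  have s1 : (f a' - f a) / (a' - a) ≤ (f (a' + b) - f a) / ((a' + b) - a) :=
    hconv.secant_mono hma hma' hma'b (by linarith) (by linarith) (by linarith)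
  have s2 : (f a - f (a' + b)) / (a - (a' + b)) ≤ (f (a + b) - f (a' + b)) / ((a + b) - (a' + b)) :=
    hconv.secant_mono hma'b hma hmab (by intro h; linarith)
      (by intro h; linarith) (by linarith)
  have e1 : (f a - f (a' + b)) / (a - (a' + b)) = (f (a' + b) - f a) / ((a' + b) - a) := by
    rw [← neg_sub (f (a' + b)) (f a), ← neg_sub (a' + b) a, neg_div_neg_eq]
  have e2 : (f (a + b) - f (a' + b)) / ((a + b) - (a' + b)) =
      (f (a' + b) - f (a + b)) / (a' - a) := by
    rw [← neg_sub (f (a' + b)) (f (a + b))]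
    rw [show (a + b) - (a' + b) = -(a' - a) by ring, neg_div_neg_eq]
  rw [e1, e2] at s2
  have key : f a' - f a ≤ f (a' + b) - f (a + b) := by
    have h := mul_le_mul_of_nonneg_right (s1.trans s2) (by linarith : (0:ℝ) ≤ a' - a)
    rw [div_mul_cancel₀ _ (by linarith : a' - a ≠ 0),
      div_mul_cancel₀ _ (by linarith : a' - a ≠ 0)] at h
    exact h
  have hexp : ∀ c : ℝ, 0 < c → Real.exp (f c) = Real.Gamma c := fun c hc =>
    Real.exp_log (Real.Gamma_pos_of_pos hc)
  calc Real.Gamma a' * Real.Gamma (a + b) = Real.exp (f a' + f (a + b)) := by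
        rw [Real.exp_add, hexp a' (by linarith), hexp (a + b) (by linarith)]
    _ ≤ Real.exp (f a + f (a' + b)) := Real.exp_le_exp.mpr (by linarith)
    _ = Real.Gamma a * Real.Gamma (a' + b) := by
        rw [Real.exp_add, hexp a ha, hexp (a' + b) (by linarith)]

lemma gamma_beta_mono (a b a' b' : ℝ) (ha : 0 < a) (hb : 0 < b)
    (haa : a ≤ a') (hbb : b ≤ b') :
    Real.Gamma a' * Real.Gamma b' * Real.Gamma (a + b) ≤
      Real.Gamma a * Real.Gamma b * Real.Gamma (a' + b') := by
  have ha' : 0 < a' := lt_of_lt_of_le ha haa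
  have h1 : Real.Gamma a' * Real.Gamma (a + b) ≤ Real.Gamma a * Real.Gamma (a' + b) :=
    logGamma_shift a a' b ha haa hb
  have h2 : Real.Gamma b' * Real.Gamma (b + a') ≤ Real.Gamma b * Real.Gamma (b' + a') :=
    logGamma_shift b b' a' hb hbb ha'
  have hga := Real.Gamma_pos_of_pos ha
  have hgb' := Real.Gamma_pos_of_pos (lt_of_lt_of_le hb hbb)
  calc Real.Gamma a' * Real.Gamma b' * Real.Gamma (a + b)
      = Real.Gamma b' * (Real.Gamma a' * Real.Gamma (a + b)) := by ring
    _ ≤ Real.Gamma b' * (Real.Gamma a * Real.Gamma (a' + b)) :=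
        mul_le_mul_of_nonneg_left h1 hgb'.le
    _ = Real.Gamma a * (Real.Gamma b' * Real.Gamma (b + a')) := by rw [add_comm b a']; ring
    _ ≤ Real.Gamma a * (Real.Gamma b * Real.Gamma (b' + a')) :=
        mul_le_mul_of_nonneg_left h2 hga.le
    _ = Real.Gamma a * Real.Gamma b * Real.Gamma (a' + b') := by rw [add_comm b' a']; ring

set_option maxHeartbeats 1000000 in
/-- Estimate for the full Mittag-Leffler-type series `∑_{k≥1} Γ(kγ)/Γ(k(1-2α)) x^{k-1}`. -/
theorem stmt_1 (α γ : ℝ) (hα : 0 < α) (hα' : α < 1/2) (hγ : 0 < γ) (hγ' : γ < 1 - 2*α) :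
    ∃ K : ℝ, 0 < K ∧ ∀ x : ℝ, 0 ≤ x →
      Summable (fun k : ℕ =>
        Gamma ((k+1 : ℕ) * γ) / Gamma ((k+1 : ℕ) * (1 - 2*α)) * x ^ k) ∧
      ∑' k : ℕ, Gamma ((k+1 : ℕ) * γ) / Gamma ((k+1 : ℕ) * (1 - 2*α)) * x ^ k
        ≤ K * exp (2 * x ^ ((1:ℝ)/(1 - 2*α - γ))) := by
  set β : ℝ := 1 - 2*α with hβdef
  set δ : ℝ := β - γ with hδdef
  have hβ : 0 < β := by rw [hβdef]; linarith
  have hδ : 0 < δ := by rw [hδdef, hβdef]; linarith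
  have hδne : δ ≠ 0 := ne_of_gt hδ
  set r : ℝ := (3/2 : ℝ) ^ (-δ) with hrdef
  have hr0 : 0 < r := Real.rpow_pos_of_pos (by norm_num) _
  have hr1 : r < 1 := Real.rpow_lt_one_of_one_lt_of_neg (by norm_num) (by linarith)
  set C0 : ℝ := Real.Gamma γ * Real.Gamma δ / Real.Gamma β with hC0def
  have hC0 : 0 < C0 := div_pos (mul_pos (Real.Gamma_pos_of_pos hγ) (Real.Gamma_pos_of_pos hδ))
    (Real.Gamma_pos_of_pos hβ)
  set C1 : ℝ := C0 * δ * Real.exp (3/2) with hC1def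
  have hC1 : 0 < C1 := by positivity
  set g : ℕ → ℝ := fun k => C1 * ((k + 1 : ℝ) * r ^ (k+1)) with hgdef
  have hgsum : Summable g := by
    have h0 : Summable (fun n : ℕ => (n : ℝ) ^ 1 * r ^ n) :=
      summable_pow_mul_geometric_of_norm_lt_one 1 (by rwa [Real.norm_eq_abs, abs_of_pos hr0])
    have h1 : Summable (fun k : ℕ => ((k + 1 : ℕ) : ℝ) ^ 1 * r ^ (k+1)) :=
      (summable_nat_add_iff 1).mpr h0
    have h2 : (fun k : ℕ => ((k + 1 : ℕ) : ℝ) ^ 1 * r ^ (k+1)) =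
        fun k : ℕ => (k + 1 : ℝ) * r ^ (k+1) := by
      funext k; push_cast; ring
    exact Summable.mul_left C1 (h2 ▸ h1)
  have hgnn : ∀ k, 0 ≤ g k := fun k =>
    mul_nonneg hC1.le (mul_nonneg (by positivity) (pow_nonneg hr0.le _))
  refine ⟨∑' k, g k + 1, add_pos_of_nonneg_of_pos (tsum_nonneg hgnn) one_pos, fun x hx => ?_⟩
  set E : ℝ := Real.exp (2 * x ^ ((1:ℝ)/δ)) with hEdef
  have hE : 0 < E := Real.exp_pos _
  have Tnn : ∀ k : ℕ, 0 ≤ Gamma ((k+1 : ℕ) * γ) / Gamma ((k+1 : ℕ) * β) * x ^ k := by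
    intro k
    have hk : (0:ℝ) < ((k+1 : ℕ) : ℝ) := by exact_mod_cast Nat.succ_pos k
    exact mul_nonneg (div_nonneg (Real.Gamma_pos_of_pos (mul_pos hk hγ)).le
      (Real.Gamma_pos_of_pos (mul_pos hk hβ)).le) (pow_nonneg hx k)
  have key : ∀ k : ℕ,
      Gamma ((k+1 : ℕ) * γ) / Gamma ((k+1 : ℕ) * β) * x ^ k ≤ g k * E := by
    intro k
    set n : ℝ := (k : ℝ) + 1 with hndef
    have hkcast : ((k + 1 : ℕ) : ℝ) = n := by rw [hndef]; push_cast; ring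
    have hkn : (0:ℝ) ≤ (k : ℝ) := Nat.cast_nonneg k
    have hn1 : 1 ≤ n := by rw [hndef]; linarith
    rw [hkcast]
    set m : ℝ := max (x ^ ((1:ℝ)/δ)) 1 with hmdef
    have hm1 : 1 ≤ m := le_max_right _ _
    have hm0 : 0 < m := lt_of_lt_of_le one_pos hm1
    set t : ℝ := 3/2 * m with htdef
    have ht : 0 < t := by positivity
    have hnγ : 0 < n * γ := by nlinarith
    have hnδ : 0 < n * δ := by nlinarith
    have hnβ : 0 < n * β := by nlinarith
    have htp : (0:ℝ) < t ^ (n*δ) := Real.rpow_pos_of_pos ht _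
    -- step 1 : Gamma ratio ≤ C0 / Gamma (n*δ)
    have h1 : Real.Gamma (n*γ) * Real.Gamma (n*δ) * Real.Gamma (γ + δ) ≤
        Real.Gamma γ * Real.Gamma δ * Real.Gamma (n*γ + n*δ) :=
      gamma_beta_mono γ δ (n*γ) (n*δ) hγ hδ (by nlinarith) (by nlinarith)
    have hγδ : γ + δ = β := by rw [hδdef]; ring
    have hnγδ : n*γ + n*δ = n*β := by rw [hδdef]; ring
    rw [hγδ, hnγδ] at h1
    have hstep1 : Real.Gamma (n*γ) / Real.Gamma (n*β) ≤ C0 / Real.Gamma (n*δ) := by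
      rw [div_le_div_iff₀ (Real.Gamma_pos_of_pos hnβ) (Real.Gamma_pos_of_pos hnδ), hC0def,
        div_mul_eq_mul_div, le_div_iff₀ (Real.Gamma_pos_of_pos hβ)]
      exact h1
    -- step 2 : lower bound for Gamma (n*δ)
    have h2 : t ^ (n*δ) * Real.exp (-t) ≤ Real.Gamma (n*δ + 1) := gamma_lb (n*δ) t hnδ.le ht
    rw [Real.Gamma_add_one (ne_of_gt hnδ)] at h2
    have hΓnδ : t ^ (n*δ) * Real.exp (-t) / (n*δ) ≤ Real.Gamma (n*δ) := by
      rw [div_le_iff₀ hnδ]; nlinarith [h2]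
    have hstep2 : C0 / Real.Gamma (n*δ) ≤ C0 * (n*δ) * Real.exp t / t ^ (n*δ) := by
      rw [div_le_div_iff₀ (Real.Gamma_pos_of_pos hnδ) htp]
      calc C0 * t ^ (n*δ)
          = C0 * (n*δ) * Real.exp t * (t ^ (n*δ) * Real.exp (-t) / (n*δ)) := by
            rw [Real.exp_neg]
            field_simp [Real.exp_ne_zero]
        _ ≤ C0 * (n*δ) * Real.exp t * Real.Gamma (n*δ) :=
            mul_le_mul_of_nonneg_left hΓnδ (by positivity)
    -- step 3 : x^k / t^(n*δ) ≤ r^(k+1)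
    have hxm : x ≤ m ^ δ := by
      have h : (x ^ ((1:ℝ)/δ)) ^ δ ≤ m ^ δ :=
        Real.rpow_le_rpow (Real.rpow_nonneg hx _) (le_max_left _ _) hδ.le
      calc x = (x ^ ((1:ℝ)/δ)) ^ δ := by
            rw [← Real.rpow_mul hx, one_div, inv_mul_cancel₀ hδne, Real.rpow_one]
        _ ≤ m ^ δ := h
    have hxk : x ^ k ≤ m ^ (n*δ) := by
      calc x ^ k ≤ (m ^ δ) ^ k := pow_le_pow_left₀ hx hxm k
        _ = m ^ (δ * (k:ℝ)) := by
            rw [← Real.rpow_natCast (m ^ δ) k, ← Real.rpow_mul hm0.le]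
        _ ≤ m ^ (n*δ) := Real.rpow_le_rpow_of_exponent_le hm1 (by rw [hndef]; nlinarith)
    have hrpow : r ^ (k+1) = (3/2 : ℝ) ^ (-(n*δ)) := by
      rw [hrdef, ← Real.rpow_natCast ((3/2 : ℝ) ^ (-δ)) (k+1),
        ← Real.rpow_mul (by norm_num : (0:ℝ) ≤ 3/2)]
      congr 1
      rw [hndef]; push_cast; ring
    have htpow : t ^ (n*δ) = (3/2 : ℝ) ^ (n*δ) * m ^ (n*δ) := Real.mul_rpow (by norm_num) hm0.le
    have hfrac : x ^ k / t ^ (n*δ) ≤ r ^ (k+1) := by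
      rw [div_le_iff₀ htp]
      calc x ^ k ≤ m ^ (n*δ) := hxk
        _ = r ^ (k+1) * t ^ (n*δ) := by
            rw [hrpow, htpow, ← mul_assoc, ← Real.rpow_add (by norm_num : (0:ℝ) < 3/2)]
            simp
    -- step 4 : exp t ≤ exp (3/2) * E
    have hxp : (0:ℝ) ≤ x ^ ((1:ℝ)/δ) := Real.rpow_nonneg hx _
    have hmle : m ≤ x ^ ((1:ℝ)/δ) + 1 := max_le (by linarith) (by linarith)
    have hexpt : Real.exp t ≤ Real.exp (3/2) * E := by
      rw [hEdef, ← Real.exp_add]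
      apply Real.exp_le_exp.mpr
      rw [htdef]
      nlinarith
    -- assemble
    calc Real.Gamma (n*γ) / Real.Gamma (n*β) * x ^ k
        ≤ (C0 * (n*δ) * Real.exp t / t ^ (n*δ)) * x ^ k :=
          mul_le_mul_of_nonneg_right (hstep1.trans hstep2) (pow_nonneg hx k)
      _ = (C0 * (n*δ) * Real.exp t) * (x ^ k / t ^ (n*δ)) := by ring
      _ ≤ (C0 * (n*δ) * Real.exp t) * r ^ (k+1) :=
          mul_le_mul_of_nonneg_left hfrac (by positivity)
      _ ≤ (C0 * (n*δ) * (Real.exp (3/2) * E)) * r ^ (k+1) := by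
          have h := mul_le_mul_of_nonneg_left hexpt (by positivity : (0:ℝ) ≤ C0 * (n*δ))
          exact mul_le_mul_of_nonneg_right h (pow_nonneg hr0.le _)
      _ = g k * E := by rw [hgdef, hC1def]; push_cast [hndef]; ring
  have hsumbound : Summable (fun k => g k * E) := hgsum.mul_right E
  have hsum : Summable (fun k : ℕ =>
      Gamma ((k+1 : ℕ) * γ) / Gamma ((k+1 : ℕ) * β) * x ^ k) :=
    Summable.of_nonneg_of_le Tnn key hsumbound
  refine ⟨hsum, ?_⟩
  calc ∑' k : ℕ, Gamma ((k+1 : ℕ) * γ) / Gamma ((k+1 : ℕ) * β) * x ^ k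
      ≤ ∑' k : ℕ, g k * E := Summable.tsum_le_tsum key hsum hsumbound
    _ = (∑' k, g k) * E := tsum_mul_right
    _ ≤ (∑' k, g k + 1) * E :=
        mul_le_mul_of_nonneg_right (by linarith) hE.le
end

section
/- Let $0<a<1$. Then for every real $x \geq 0$, $\sum_{k=0}^{\infty} \frac{x^{k}}{\Gamma((1+k)a)} \leq \frac{4e^{2}}{a} \, e^{2 x^{1/a}}$. -/
set_option maxHeartbeats 1000000

open Real

/-- `Γ(s) ≥ e⁻¹` for `s ≥ 1`. -/
lemma aux_gamma_ge {s : ℝ} (hs : 1 ≤ s) : Real.exp (-1) ≤ Real.Gamma s := by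
  have hs0 : (0:ℝ) < s := lt_of_lt_of_le one_pos hs
  rw [Real.Gamma_eq_integral hs0]
  have hint0 : MeasureTheory.IntegrableOn (fun x : ℝ => Real.exp (-x) * x ^ (s - 1))
      (Set.Ioi 0) := Real.GammaIntegral_convergent hs0
  have hint1 : MeasureTheory.IntegrableOn (fun x : ℝ => Real.exp (-x) * x ^ (s - 1))
      (Set.Ioi 1) := hint0.mono_set (Set.Ioi_subset_Ioi zero_le_one)
  have h1 : Real.exp (-1) = ∫ x in Set.Ioi (1:ℝ), Real.exp (-x) := (integral_exp_neg_Ioi 1).symm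
  rw [h1]
  have step1 : (∫ x in Set.Ioi (1:ℝ), Real.exp (-x)) ≤
      ∫ x in Set.Ioi (1:ℝ), Real.exp (-x) * x ^ (s - 1) := by
    have hexpint : MeasureTheory.IntegrableOn (fun x : ℝ => Real.exp (-x)) (Set.Ioi 1) := by
      simpa using exp_neg_integrableOn_Ioi 1 one_pos
    refine MeasureTheory.setIntegral_mono_on hexpint hint1 measurableSet_Ioi ?_
    intro x hx
    have hx1 : (1:ℝ) ≤ x := le_of_lt hx
    have h2 : (1:ℝ) ≤ x ^ (s - 1) := by
      have := Real.rpow_le_rpow_of_exponent_le hx1 (by linarith : (0:ℝ) ≤ s - 1)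
      rwa [Real.rpow_zero] at this
    nlinarith [Real.exp_pos (-x)]
  have step2 : (∫ x in Set.Ioi (1:ℝ), Real.exp (-x) * x ^ (s - 1)) ≤
      ∫ x in Set.Ioi (0:ℝ), Real.exp (-x) * x ^ (s - 1) := by
    refine MeasureTheory.setIntegral_mono_set hint0 ?_ ?_
    · filter_upwards [MeasureTheory.ae_restrict_mem measurableSet_Ioi] with x hx
      exact mul_nonneg (Real.exp_pos _).le (Real.rpow_nonneg (le_of_lt hx) _)
    · exact Filter.Eventually.of_forall (Set.Ioi_subset_Ioi zero_le_one)
  linarith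

/-- `Γ(s) ≥ n! e⁻¹` for `s ≥ n+1`. -/
lemma aux_gamma_fact : ∀ n : ℕ, ∀ s : ℝ, (n + 1 : ℝ) ≤ s →
    (Nat.factorial n : ℝ) * Real.exp (-1) ≤ Real.Gamma s := by
  intro n
  induction n with
  | zero =>
    intro s hs
    have h1 : (1:ℝ) ≤ s := by norm_num at hs; exact hs
    simpa using aux_gamma_ge h1
  | succ n ih =>
    intro s hs
    have h1 : (n + 1 : ℝ) ≤ s - 1 := by push_cast at hs ⊢; linarith
    have hn1 : (0:ℝ) < n + 1 := by positivity
    have hpos : s - 1 ≠ 0 := by intro h; rw [h] at h1; linarith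
    have hrec : Real.Gamma s = (s - 1) * Real.Gamma (s - 1) := by
      have := Real.Gamma_add_one hpos
      rwa [sub_add_cancel] at this
    have hih := ih (s - 1) h1
    have hGpos : 0 ≤ Real.Gamma (s - 1) :=
      (Real.Gamma_pos_of_pos (by linarith)).le
    rw [hrec]
    have hfac : (Nat.factorial (n+1) : ℝ) = (n + 1) * Nat.factorial n := by
      rw [Nat.factorial_succ]; push_cast; ring
    push_cast [hfac]
    calc (n + 1 : ℝ) * Nat.factorial n * Real.exp (-1) = (n + 1) * ((Nat.factorial n : ℝ) * Real.exp (-1)) := by ring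
      _ ≤ (n + 1) * Real.Gamma (s - 1) :=
          mul_le_mul_of_nonneg_left hih (by positivity)
      _ ≤ (s - 1) * Real.Gamma (s - 1) := by
          apply mul_le_mul_of_nonneg_right _ hGpos
          push_cast at hs; linarith

/-- `Γ(s) ≥ (⌊s⌋-1)! e⁻¹` for `s > 0`. -/
lemma aux_gamma_floor {s : ℝ} (hs : 0 < s) :
    (Nat.factorial (⌊s⌋₊ - 1) : ℝ) * Real.exp (-1) ≤ Real.Gamma s := by
  rcases le_or_gt 1 s with h1 | h1
  · have hfl : 1 ≤ ⌊s⌋₊ := (Nat.one_le_floor_iff s).mpr h1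
    have key : ((⌊s⌋₊ - 1 : ℕ) + 1 : ℝ) ≤ s := by
      have : ((⌊s⌋₊ - 1 : ℕ) + 1 : ℕ) = ⌊s⌋₊ := Nat.succ_pred_eq_of_pos hfl
      have h2 : ((⌊s⌋₊ : ℕ) : ℝ) ≤ s := Nat.floor_le hs.le
      push_cast [this]
      exact_mod_cast this ▸ h2
    exact aux_gamma_fact (⌊s⌋₊ - 1) s key
  · have hfl : ⌊s⌋₊ = 0 := Nat.floor_eq_zero.mpr h1
    rw [hfl]
    simp only [Nat.zero_sub, Nat.factorial_zero, Nat.cast_one, one_mul]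
    have hrec : Real.Gamma (s + 1) = s * Real.Gamma s := Real.Gamma_add_one hs.ne'
    have hge : Real.exp (-1) ≤ Real.Gamma (s + 1) := aux_gamma_ge (by linarith)
    have hGpos : 0 < Real.Gamma s := Real.Gamma_pos_of_pos hs
    nlinarith

/-- Mittag-Leffler-type bound: `∑_{k≥0} x^k / Γ((1+k)a) ≤ (4e²/a) e^{2 x^{1/a}}`. -/
theorem stmt_2 (a : ℝ) (ha : 0 < a) (ha' : a < 1) :
    ∀ x : ℝ, 0 ≤ x →
      Summable (fun k : ℕ => x ^ k / Gamma ((1 + k : ℕ) * a)) ∧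
      ∑' k : ℕ, x ^ k / Gamma ((1 + k : ℕ) * a)
        ≤ 4 * exp 2 / a * exp (2 * x ^ ((1:ℝ)/a)) := by
  intro x hx
  set y : ℝ := x ^ ((1:ℝ)/a) with hy_def
  have hy : 0 ≤ y := Real.rpow_nonneg hx _
  set Y : ℝ := max 1 y with hY_def
  have hY1 : (1:ℝ) ≤ Y := le_max_left _ _
  have hY0 : (0:ℝ) < Y := lt_of_lt_of_le one_pos hY1
  set t : ℕ → ℝ := fun k => x ^ k / Real.Gamma (((1 + k : ℕ) : ℝ) * a) with ht_def
  set n : ℕ → ℕ := fun k => ⌊((1 + k : ℕ) : ℝ) * a⌋₊ with hn_def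
  set F : ℕ → ℝ := fun m => Real.exp 1 * Y ^ (m + 1) / (Nat.factorial (m - 1) : ℝ) with hF_def
  have hs_pos : ∀ k : ℕ, 0 < ((1 + k : ℕ) : ℝ) * a := by
    intro k
    have : (0:ℝ) < ((1 + k : ℕ) : ℝ) := by positivity
    positivity
  have ht0 : ∀ k, 0 ≤ t k := fun k =>
    div_nonneg (pow_nonneg hx k) (Real.Gamma_pos_of_pos (hs_pos k)).le
  have hF0 : ∀ m, 0 ≤ F m := by
    intro m
    have : (0:ℝ) < (Nat.factorial (m - 1) : ℝ) := by exact_mod_cast (m-1).factorial_pos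
    positivity
  -- per-term bound
  have hbound : ∀ k, t k ≤ F (n k) := by
    intro k
    have hG : (Nat.factorial (n k - 1) : ℝ) * Real.exp (-1) ≤ Real.Gamma (((1 + k : ℕ) : ℝ) * a) :=
      aux_gamma_floor (hs_pos k)
    have hGd : (0:ℝ) < (Nat.factorial (n k - 1) : ℝ) * Real.exp (-1) := by
      have : (0:ℝ) < (Nat.factorial (n k - 1) : ℝ) := by exact_mod_cast (n k - 1).factorial_pos
      positivity
    have hxk : x ^ k ≤ Y ^ (n k + 1) := by
      have e1 : x ^ k = y ^ (a * (k:ℝ)) := by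
        rw [hy_def, ← Real.rpow_natCast x k, ← Real.rpow_mul hx]
        congr 1
        field_simp
      have e2 : y ^ (a * (k:ℝ)) ≤ Y ^ (a * (k:ℝ)) :=
        Real.rpow_le_rpow hy (le_max_right _ _) (by positivity)
      have e3 : a * (k:ℝ) ≤ ((n k + 1 : ℕ) : ℝ) := by
        have h4 : ((1 + k : ℕ) : ℝ) * a < (n k : ℝ) + 1 := Nat.lt_floor_add_one _
        have h5 : a * (k:ℝ) ≤ ((1 + k : ℕ) : ℝ) * a := by push_cast; nlinarith
        push_cast
        linarith
      have e4 : Y ^ (a * (k:ℝ)) ≤ Y ^ (((n k + 1 : ℕ) : ℝ)) :=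
        Real.rpow_le_rpow_of_exponent_le hY1 e3
      rw [Real.rpow_natCast] at e4
      calc x ^ k = y ^ (a * (k:ℝ)) := e1
        _ ≤ Y ^ (a * (k:ℝ)) := e2
        _ ≤ Y ^ (n k + 1) := e4
    have hchain : t k ≤ Y ^ (n k + 1) / ((Nat.factorial (n k - 1) : ℝ) * Real.exp (-1)) :=
      div_le_div₀ (by positivity) hxk hGd hG
    refine hchain.trans (le_of_eq ?_)
    rw [hF_def]
    simp only
    rw [Real.exp_neg]
    have hfpos : (0:ℝ) < (Nat.factorial (n k - 1) : ℝ) := by exact_mod_cast (n k - 1).factorial_pos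
    field_simp
  -- summability of F
  have hFsh : (fun m => F (m + 1)) = fun m => (Real.exp 1 * Y ^ 2) * (Y ^ m / (Nat.factorial m : ℝ)) := by
    funext m
    rw [hF_def]
    simp only [Nat.add_sub_cancel]
    field_simp
    ring
  have hF : Summable F := by
    rw [← summable_nat_add_iff 1, hFsh]
    exact (Real.summable_pow_div_factorial Y).mul_left _
  have hFsum : ∑' m, F m ≤ 2 * Real.exp 1 * Y ^ 2 * Real.exp Y := by
    have hexp : Real.exp Y = ∑' m : ℕ, Y ^ m / (Nat.factorial m : ℝ) := by
      rw [Real.exp_eq_exp_ℝ, NormedSpace.exp_eq_tsum_div]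
    rw [Summable.tsum_eq_zero_add hF, hFsh, tsum_mul_left, ← hexp]
    have hF0' : F 0 = Real.exp 1 * Y := by
      rw [hF_def]; norm_num
    rw [hF0']
    have h1 : (1:ℝ) ≤ Real.exp Y := by
      rw [← Real.exp_zero]; exact Real.exp_le_exp.mpr hY0.le
    have hYle : Y ≤ Y ^ 2 * Real.exp Y := by nlinarith [sq_nonneg Y]
    nlinarith [Real.exp_pos 1, Real.exp_pos Y, mul_le_mul_of_nonneg_left hYle (Real.exp_pos 1).le]
  -- the step K
  set K : ℕ := ⌈1/a⌉₊ with hK_def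
  have hKa : (1:ℝ) ≤ (K:ℝ) * a := by
    have : (1/a : ℝ) ≤ (K:ℝ) := Nat.le_ceil _
    rw [div_le_iff₀ ha] at this
    linarith
  have hK0 : 0 < K := by
    by_contra h
    push_neg at h
    interval_cases K
    simp at hKa; nlinarith
  have hKle : (K:ℝ) ≤ 2 / a := by
    have h1 : (K:ℝ) < 1/a + 1 := Nat.ceil_lt_add_one (by positivity)
    have h2 : (1:ℝ) ≤ 1/a := by
      rw [le_div_iff₀ ha]; linarith
    have h3 : (2:ℝ)/a = 1/a + 1/a := by ring
    linarith
  -- n increases by at least 1 after K steps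
  have hstep : ∀ k, n k + 1 ≤ n (k + K) := by
    intro k
    apply Nat.le_floor
    have h1 : ((n k : ℕ) : ℝ) ≤ ((1 + k : ℕ) : ℝ) * a := Nat.floor_le (hs_pos k).le
    push_cast at h1 ⊢
    nlinarith [hKa]
  -- slices
  have hslice_mono : ∀ r : ℕ, StrictMono (fun j => n (j * K + r)) := by
    intro r
    apply strictMono_nat_of_lt_succ
    intro j
    have : (j + 1) * K + r = (j * K + r) + K := by ring
    rw [this]
    have := hstep (j * K + r)
    omega
  have hslice_sum : ∀ r : ℕ, Summable (fun j => t (j * K + r)) := by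
    intro r
    refine Summable.of_nonneg_of_le (fun j => ht0 _) (fun j => hbound _)
      (hF.comp_injective (hslice_mono r).injective)
  have hslice_le : ∀ r : ℕ, ∑' j, t (j * K + r) ≤ ∑' m, F m := by
    intro r
    calc ∑' j, t (j * K + r) ≤ ∑' j, F (n (j * K + r)) :=
          Summable.tsum_le_tsum (fun j => hbound _) (hslice_sum r)
            (hF.comp_injective (hslice_mono r).injective)
      _ ≤ ∑' m, F m :=
          Summable.tsum_le_tsum_of_inj (fun j => n (j * K + r)) (hslice_mono r).injective
            (fun c _ => hF0 c) (fun j => le_rfl)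
            (hF.comp_injective (hslice_mono r).injective) hF
  -- assemble via ℕ ≃ Fin K × ℕ
  haveI : NeZero K := ⟨hK0.ne'⟩
  set T : Fin K × ℕ → ℝ := fun p => t (p.2 * K + (p.1 : ℕ)) with hT_def
  have hT : Summable T := by
    rw [summable_prod_of_nonneg (fun p => ht0 _)]
    constructor
    · intro r; exact hslice_sum r
    · exact Summable.of_finite
  set e : ℕ ≃ Fin K × ℕ := (Nat.divModEquiv K).trans (Equiv.prodComm ℕ (Fin K)) with he_def
  have hTe : ∀ k, T (e k) = t k := by
    intro k
    simp only [hT_def, he_def, Equiv.trans_apply, Nat.divModEquiv_apply, Equiv.prodComm_apply,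
      Prod.swap_prod_mk]
    congr 1
    simpa using Nat.div_add_mod' k K
  have hsummable : Summable t := by
    have := (e.summable_iff (f := T)).mpr hT
    refine this.congr hTe
  refine ⟨hsummable, ?_⟩
  have htot : ∑' k, t k ≤ (K:ℝ) * (2 * Real.exp 1 * Y ^ 2 * Real.exp Y) := by
    have h1 : ∑' k, t k = ∑' p : Fin K × ℕ, T p := by
      rw [← e.tsum_eq T]
      exact tsum_congr fun k => (hTe k).symm
    rw [h1, Summable.tsum_prod hT, tsum_fintype]
    have h2 : ∀ r : Fin K, (∑' j, T (r, j)) ≤ 2 * Real.exp 1 * Y ^ 2 * Real.exp Y := by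
      intro r
      exact (hslice_le r).trans hFsum
    calc (∑ r : Fin K, ∑' j, T (r, j))
        ≤ ∑ r : Fin K, 2 * Real.exp 1 * Y ^ 2 * Real.exp Y :=
          Finset.sum_le_sum (fun r _ => h2 r)
      _ = (K:ℝ) * (2 * Real.exp 1 * Y ^ 2 * Real.exp Y) := by
          rw [Finset.sum_const, Finset.card_univ, Fintype.card_fin, nsmul_eq_mul]
  -- final numeric estimate
  have hkey : Real.exp 1 * Y ^ 2 * Real.exp Y ≤ Real.exp 2 * Real.exp (2 * y) := by
    rcases le_or_gt y 1 with h1 | h1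
    · have hYeq : Y = 1 := max_eq_left h1
      rw [hYeq]
      have : Real.exp 1 * 1 ^ 2 * Real.exp 1 = Real.exp 2 := by
        rw [one_pow, mul_one, ← Real.exp_add]; norm_num
      rw [this]
      nlinarith [Real.exp_pos 2, Real.one_le_exp (by linarith : (0:ℝ) ≤ 2 * y)]
    · have hYeq : Y = y := max_eq_right h1.le
      rw [hYeq]
      have hy2 : y ^ 2 ≤ Real.exp 1 * Real.exp y := by
        have h4 : y/4 + 1 ≤ Real.exp (y/4) := Real.add_one_le_exp (y/4)
        have hE : Real.exp y = Real.exp (y/4) ^ 4 := by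
          rw [← Real.exp_nat_mul]; congr 1; push_cast; ring
        have hE4 : (y/4 + 1) ^ 4 ≤ Real.exp (y/4) ^ 4 :=
          pow_le_pow_left₀ (by linarith) h4 4
        have he1 : (2.7182818283 : ℝ) < Real.exp 1 := Real.exp_one_gt_d9
        rw [hE]
        nlinarith [sq_nonneg y, pow_nonneg (by linarith : (0:ℝ) ≤ y) 3,
          pow_nonneg (by linarith : (0:ℝ) ≤ y) 4, Real.exp_pos (y/4)]
      have h2 : Real.exp 2 * Real.exp (2 * y) = Real.exp 1 * Real.exp 1 * (Real.exp y)^2 := by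
        rw [← Real.exp_add, ← Real.exp_add, ← Real.exp_nat_mul]
        rw [← Real.exp_add]
        norm_num [two_mul]
      rw [h2]
      nlinarith [Real.exp_pos 1, Real.exp_pos y]
  have hS0 : (0:ℝ) ≤ 2 * Real.exp 1 * Y ^ 2 * Real.exp Y := by positivity
  calc ∑' k, t k ≤ (K:ℝ) * (2 * Real.exp 1 * Y ^ 2 * Real.exp Y) := htot
    _ ≤ (2/a) * (2 * Real.exp 1 * Y ^ 2 * Real.exp Y) :=
        mul_le_mul_of_nonneg_right hKle hS0
    _ ≤ (2/a) * (2 * (Real.exp 2 * Real.exp (2 * y))) := by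
        apply mul_le_mul_of_nonneg_left _ (by positivity)
        nlinarith [hkey]
    _ = 4 * Real.exp 2 / a * Real.exp (2 * y) := by field_simp; ring
end

section
/- Let $0<\alpha<1/2$, $T>0$, and $A \geq 0$, $D \geq 0$. Let $(\varphi_k)_{k\geq 1}$ be a sequence of nonnegative measurable functions on $[0,T]$ such that $\varphi_1(t) \leq D$ for all $t\in[0,T]$, and such that for every $k\geq 1$ and every $t\in[0,T]$, $\varphi_{k+1}(t) \leq A \int_0^t \left((t-r)^{-2\alpha} + r^{-\alpha}\right) \varphi_k(r)\,dr$. Then for every $n\geq 1$ and every $t\in[0,T]$, $\varphi_n(t) \leq D \, \frac{\Gamma(1-2\alpha)}{\Gamma(n(1-2\alpha))} \left( A\,(1+T^{\alpha})\,\Gamma(1-2\alpha)\,T^{1-2\alpha} \right)^{n-1}$. -/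
open Real MeasureTheory

lemma cbeta (x y : ℝ) :
    Complex.betaIntegral x y = ((∫ u in (0:ℝ)..1, u^(x-1) * (1-u)^(y-1) : ℝ) : ℂ) := by
  rw [Complex.betaIntegral, ← intervalIntegral.integral_ofReal]
  rw [intervalIntegral.integral_of_le zero_le_one, intervalIntegral.integral_of_le zero_le_one]
  refine setIntegral_congr_fun measurableSet_Ioc fun u hu => ?_
  rw [Complex.ofReal_mul, Complex.ofReal_cpow hu.1.le,
    Complex.ofReal_cpow (by linarith [hu.2] : (0:ℝ) ≤ 1 - u)]
  push_cast
  ring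

lemma rbeta (x y : ℝ) (hx : 0 < x) (hy : 0 < y) :
    ∫ u in (0:ℝ)..1, u^(x-1) * (1-u)^(y-1) = Gamma x * Gamma y / Gamma (x+y) := by
  have h := Complex.Gamma_mul_Gamma_eq_betaIntegral (s := x) (t := y)
    (by simpa using hx) (by simpa using hy)
  rw [cbeta] at h
  have hG : Gamma (x+y) ≠ 0 := (Real.Gamma_pos_of_pos (by linarith)).ne'
  have h2 : ((Gamma x * Gamma y : ℝ) : ℂ)
      = ((Gamma (x+y) * ∫ u in (0:ℝ)..1, u^(x-1) * (1-u)^(y-1) : ℝ) : ℂ) := by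
    push_cast
    rw [← Complex.Gamma_ofReal, ← Complex.Gamma_ofReal, ← Complex.Gamma_ofReal]
    exact_mod_cast h
  field_simp
  linarith [Complex.ofReal_injective h2]

lemma rbeta_integrable (x y : ℝ) (hx : 0 < x) (hy : 0 < y) :
    IntervalIntegrable (fun u : ℝ => u^(x-1) * (1-u)^(y-1)) volume 0 1 := by
  have h := Complex.betaIntegral_convergent (u := x) (v := y) (by simpa using hx) (by simpa using hy)
  have h2 : IntervalIntegrable (fun u : ℝ =>
      ((u:ℂ) ^ ((x:ℂ) - 1) * (1 - (u:ℂ)) ^ ((y:ℂ) - 1)).re) volume 0 1 := by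
    rw [intervalIntegrable_iff] at h ⊢
    exact h.re
  apply h2.congr
  rw [Set.uIoc_of_le (zero_le_one' ℝ)]
  refine fun u hu => ?_
  simp only
  rw [show ((x:ℂ)-1) = ((x-1:ℝ):ℂ) by push_cast; ring,
    show ((y:ℂ)-1) = ((y-1:ℝ):ℂ) by push_cast; ring,
    show (1 - (u:ℂ)) = ((1-u:ℝ):ℂ) by push_cast; ring,
    ← Complex.ofReal_cpow hu.1.le, ← Complex.ofReal_cpow (by linarith [hu.2] : (0:ℝ) ≤ 1 - u),
    ← Complex.ofReal_mul, Complex.ofReal_re]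

lemma rscaled (γ y t : ℝ) (hy : 0 < y) (ht : 0 < t) :
    ∫ r in (0:ℝ)..t, r^γ * (t-r)^(y-1)
      = t^(γ+y) * ∫ u in (0:ℝ)..1, u^γ * (1-u)^(y-1) := by
  have h := Complex.betaIntegral_scaled (s := (γ+1:ℝ)) (t := (y:ℝ)) ht
  rw [cbeta] at h
  have hL : (∫ x in (0:ℝ)..t, (x:ℂ) ^ ((((γ+1):ℝ):ℂ) - 1) * ((t:ℂ) - x) ^ (((y:ℝ):ℂ) - 1))
      = ((∫ r in (0:ℝ)..t, r^γ * (t-r)^(y-1) : ℝ) : ℂ) := by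
    rw [← intervalIntegral.integral_ofReal,
      intervalIntegral.integral_of_le ht.le, intervalIntegral.integral_of_le ht.le]
    refine setIntegral_congr_fun measurableSet_Ioc fun r hr => ?_
    rw [Complex.ofReal_mul, Complex.ofReal_cpow hr.1.le,
      Complex.ofReal_cpow (by linarith [hr.2] : (0:ℝ) ≤ t - r)]
    push_cast
    ring
  rw [hL] at h
  have hR : ((t:ℂ) ^ ((((γ+1):ℝ):ℂ) + (y:ℂ) - 1)) = ((t ^ (γ+y) : ℝ) : ℂ) := by
    rw [Complex.ofReal_cpow ht.le]
    push_cast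
    ring_nf
  rw [hR] at h
  have h2 : ((∫ r in (0:ℝ)..t, r^γ * (t-r)^(y-1) : ℝ) : ℂ)
      = ((t ^ (γ+y) * ∫ u in (0:ℝ)..1, u^((γ+1)-1) * (1-u)^(y-1) : ℝ) : ℂ) := by
    rw [h]; push_cast; ring
  have h3 := Complex.ofReal_injective h2
  simpa using h3

lemma rscaled_integrable (γ y t : ℝ) (hγ : 0 ≤ γ) (hy : 0 < y) (ht : 0 < t) :
    IntervalIntegrable (fun r : ℝ => r^γ * (t-r)^(y-1)) volume 0 t := by
  have hg : IntervalIntegrable (fun r : ℝ => t^γ * (t-r)^(y-1)) volume 0 t := by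
    have := (intervalIntegral.intervalIntegrable_rpow' (a := 0) (b := t)
      (r := y-1) (by linarith)).comp_sub_left t
    simpa using (this.const_mul (t^γ)).symm
  refine hg.mono_fun' ?_ ?_
  · apply Measurable.aestronglyMeasurable
    fun_prop
  · rw [Set.uIoc_of_le ht.le]
    refine (ae_restrict_iff' measurableSet_Ioc).2 (Filter.Eventually.of_forall fun r hr => ?_)
    have h1 : (0:ℝ) ≤ (t-r)^(y-1) := rpow_nonneg (by linarith [hr.2]) _
    have h2 : (0:ℝ) ≤ r^γ := rpow_nonneg hr.1.le _
    simp only [Real.norm_eq_abs]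
    rw [abs_of_nonneg (mul_nonneg h2 h1)]
    exact mul_le_mul_of_nonneg_right (rpow_le_rpow hr.1.le hr.2 hγ) h1

lemma rsymm (f : ℝ → ℝ) : ∫ u in (0:ℝ)..1, f (1-u) = ∫ u in (0:ℝ)..1, f u := by
  simpa using intervalIntegral.integral_comp_sub_left f 1

lemma comp1 (β c : ℝ) (hβ : 0 < β) (hβ1 : β < 1) (hc : 0 ≤ c) :
    ∫ u in (0:ℝ)..1, u^c * (1-u)^(β-1) ≤ ∫ u in (0:ℝ)..1, u^(β-1) * (1-u)^((c+β)-1) := by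
  have hsym : ∫ u in (0:ℝ)..1, u^c * (1-u)^(β-1)
      = ∫ u in (0:ℝ)..1, u^(β-1) * (1-u)^c := by
    rw [← rsymm (fun v => v^c * (1-v)^(β-1))]
    refine intervalIntegral.integral_congr fun u hu => ?_
    simp only [sub_sub_cancel]
    ring
  rw [hsym, intervalIntegral.integral_of_le zero_le_one,
    intervalIntegral.integral_of_le zero_le_one,
    integral_Ioc_eq_integral_Ioo, integral_Ioc_eq_integral_Ioo]
  have hi1 : IntegrableOn (fun u : ℝ => u^(β-1) * (1-u)^c) (Set.Ioo 0 1) volume := by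
    have := (rbeta_integrable β (c+1) hβ (by linarith)).1
    simpa using this.mono_set Set.Ioo_subset_Ioc_self
  have hi2 : IntegrableOn (fun u : ℝ => u^(β-1) * (1-u)^((c+β)-1)) (Set.Ioo 0 1) volume := by
    have := (rbeta_integrable β (c+β) hβ (by linarith)).1
    simpa using this.mono_set Set.Ioo_subset_Ioc_self
  refine setIntegral_mono_on hi1 hi2 measurableSet_Ioo fun u hu => ?_
  have h1 : (0:ℝ) < 1 - u := by linarith [hu.2]
  refine mul_le_mul_of_nonneg_left ?_ (rpow_nonneg hu.1.le _)
  exact rpow_le_rpow_of_exponent_ge h1 (by linarith [hu.1]) (by linarith)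

lemma comp2 (β a c : ℝ) (hβ : 0 < β) (hβ1 : β < 1) (ha : 0 ≤ a) (hc : 0 ≤ c) :
    1/(c+β+a) ≤ ∫ u in (0:ℝ)..1, u^(β-1) * (1-u)^((c+β)-1) := by
  have hval : ∫ u in (0:ℝ)..1, (1-u)^(c+β+a-1) = 1/(c+β+a) := by
    rw [rsymm (fun v => v^(c+β+a-1)), integral_rpow (Or.inl (by linarith))]
    rw [Real.one_rpow, Real.zero_rpow (by intro h; linarith)]
    ring_nf
  rw [← hval, intervalIntegral.integral_of_le zero_le_one,
    intervalIntegral.integral_of_le zero_le_one,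
    integral_Ioc_eq_integral_Ioo, integral_Ioc_eq_integral_Ioo]
  have hi1 : IntegrableOn (fun u : ℝ => (1-u)^(c+β+a-1)) (Set.Ioo 0 1) volume := by
    have := (rbeta_integrable 1 (c+β+a) one_pos (by linarith)).1
    have h2 := this.mono_set Set.Ioo_subset_Ioc_self
    simpa using h2
  have hi2 : IntegrableOn (fun u : ℝ => u^(β-1) * (1-u)^((c+β)-1)) (Set.Ioo 0 1) volume := by
    have := (rbeta_integrable β (c+β) hβ (by linarith)).1
    simpa using this.mono_set Set.Ioo_subset_Ioc_self
  refine setIntegral_mono_on hi1 hi2 measurableSet_Ioo fun u hu => ?_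
  have h1 : (0:ℝ) < 1 - u := by linarith [hu.2]
  calc (1-u)^(c+β+a-1) ≤ (1-u)^((c+β)-1) :=
        rpow_le_rpow_of_exponent_ge h1 (by linarith [hu.1]) (by linarith)
    _ = 1 * (1-u)^((c+β)-1) := (one_mul _).symm
    _ ≤ u^(β-1) * (1-u)^((c+β)-1) := by
        refine mul_le_mul_of_nonneg_right ?_ (rpow_nonneg h1.le _)
        exact Real.one_le_rpow_of_pos_of_le_one_of_nonpos hu.1 hu.2.le (by linarith)

/-- Iterated Gronwall-type estimate with the singular kernel `(t-r)^{-2α} + r^{-α}`. -/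
theorem stmt_4 (α T A D : ℝ) (hα : 0 < α) (hα' : α < 1/2) (hT : 0 < T)
    (hA : 0 ≤ A) (hD : 0 ≤ D) (φ : ℕ → ℝ → ℝ)
    (hmeas : ∀ k : ℕ, 1 ≤ k → Measurable (φ k))
    (hnonneg : ∀ k : ℕ, 1 ≤ k → ∀ t ∈ Set.Icc (0:ℝ) T, 0 ≤ φ k t)
    (h1 : ∀ t ∈ Set.Icc (0:ℝ) T, φ 1 t ≤ D)
    (hrec : ∀ k : ℕ, 1 ≤ k → ∀ t ∈ Set.Icc (0:ℝ) T,
      φ (k+1) t ≤ A * ∫ r in (0:ℝ)..t, ((t - r) ^ (-(2*α)) + r ^ (-α)) * φ k r) :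
    ∀ n : ℕ, 1 ≤ n → ∀ t ∈ Set.Icc (0:ℝ) T,
      φ n t ≤ D * (Gamma (1 - 2*α) / Gamma ((n : ℝ) * (1 - 2*α)))
        * (A * (1 + T ^ α) * Gamma (1 - 2*α) * T ^ (1 - 2*α)) ^ (n - 1) := by
  set β : ℝ := 1 - 2*α with hβdef
  have hβ : 0 < β := by rw [hβdef]; linarith
  have hβ1 : β < 1 := by rw [hβdef]; linarith
  set M : ℝ := A * (1 + T^α) with hMdef
  have hM : 0 ≤ M := mul_nonneg hA (by positivity)
  have hΓβ : 0 < Gamma β := Real.Gamma_pos_of_pos hβ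
  -- the main induction
  have Q : ∀ m : ℕ, ∀ t ∈ Set.Icc (0:ℝ) T,
      φ (m+1) t ≤ D * (M * Gamma β)^m * (Gamma β / Gamma (((m:ℝ)+1)*β)) * t^((m:ℝ)*β) := by
    intro m
    induction m with
    | zero =>
      intro t ht
      simpa [div_self hΓβ.ne'] using h1 t ht
    | succ m IH =>
      intro t ht
      have hcm : (0:ℝ) ≤ ((m:ℝ)+1) := by positivity
      have hΓm1 : 0 < Gamma (((m:ℝ)+1)*β) := Real.Gamma_pos_of_pos (by positivity)
      have hΓm2 : 0 < Gamma (((m:ℝ)+1+1)*β) := Real.Gamma_pos_of_pos (by positivity)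
      set c : ℝ := D * (M * Gamma β)^m * (Gamma β / Gamma (((m:ℝ)+1)*β)) with hcdef
      have hc : 0 ≤ c := by
        apply mul_nonneg (mul_nonneg hD (pow_nonneg (mul_nonneg hM hΓβ.le) m))
        positivity
      rcases eq_or_lt_of_le ht.1 with h0 | h0
      · -- t = 0
        have := hrec (m+1) (by omega) 0 ⟨le_refl 0, hT.le⟩
        simp only [intervalIntegral.integral_same, mul_zero] at this
        rw [← h0, Real.zero_rpow (by positivity), mul_zero]
        exact this
      · -- 0 < t
        have htT : t ≤ T := ht.2
        set mb : ℝ := (m:ℝ)*β with hmbdef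
        have hmb : 0 ≤ mb := by positivity
        -- pointwise bound of the integrand
        have hpt : ∀ r ∈ Set.Icc (0:ℝ) t,
            ((t - r) ^ (-(2*α)) + r ^ (-α)) * φ (m+1) r
              ≤ c * (r^mb * (t-r)^(β-1)) + c * r^(mb-α) := by
          intro r hr
          have hrT : r ∈ Set.Icc (0:ℝ) T := ⟨hr.1, hr.2.trans htT⟩
          have hφ := IH r hrT
          have hK : (0:ℝ) ≤ (t - r) ^ (-(2*α)) + r ^ (-α) :=
            add_nonneg (rpow_nonneg (by linarith [hr.2]) _) (rpow_nonneg hr.1 _)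
          calc ((t - r) ^ (-(2*α)) + r ^ (-α)) * φ (m+1) r
              ≤ ((t - r) ^ (-(2*α)) + r ^ (-α)) * (c * r^mb) :=
                mul_le_mul_of_nonneg_left hφ hK
            _ = c * (r^mb * (t-r)^(-(2*α))) + c * (r^(-α) * r^mb) := by ring
            _ ≤ c * (r^mb * (t-r)^(β-1)) + c * r^(mb-α) := by
                have he : -(2*α) = β - 1 := by rw [hβdef]; ring
                rw [he]
                refine add_le_add le_rfl (mul_le_mul_of_nonneg_left ?_ hc)
                rcases eq_or_lt_of_le hr.1 with h0r | h0r
                · rw [← h0r, Real.zero_rpow (by intro h; exact hα.ne' (by linarith)), zero_mul]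
                  exact rpow_nonneg le_rfl _
                · rw [← Real.rpow_add h0r]
                  rw [show -α + mb = mb - α by ring]
        -- integrability of the dominating function
        have hint1 : IntervalIntegrable (fun r : ℝ => r^mb * (t-r)^(β-1)) volume 0 t :=
          rscaled_integrable mb β t hmb hβ h0
        have hint2 : IntervalIntegrable (fun r : ℝ => r^(mb-α)) volume 0 t :=
          intervalIntegral.intervalIntegrable_rpow' (by rw [hβdef] at *; linarith)
        have hintg : IntervalIntegrable
            (fun r : ℝ => c * (r^mb * (t-r)^(β-1)) + c * r^(mb-α)) volume 0 t :=
          (hint1.const_mul c).add (hint2.const_mul c)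
        -- integrability of the integrand
        have hintf : IntervalIntegrable
            (fun r : ℝ => ((t - r) ^ (-(2*α)) + r ^ (-α)) * φ (m+1) r) volume 0 t := by
          refine hintg.mono_fun' ?_ ?_
          · apply Measurable.aestronglyMeasurable
            have := hmeas (m+1) (by omega)
            fun_prop
          · rw [Set.uIoc_of_le h0.le]
            refine (ae_restrict_iff' measurableSet_Ioc).2
              (Filter.Eventually.of_forall fun r hr => ?_)
            have hr' : r ∈ Set.Icc (0:ℝ) t := ⟨hr.1.le, hr.2⟩
            have hrT : r ∈ Set.Icc (0:ℝ) T := ⟨hr.1.le, hr.2.trans htT⟩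
            have hK : (0:ℝ) ≤ (t - r) ^ (-(2*α)) + r ^ (-α) :=
              add_nonneg (rpow_nonneg (by linarith [hr.2]) _) (rpow_nonneg hr.1.le _)
            simp only [Real.norm_eq_abs]
            rw [abs_of_nonneg (mul_nonneg hK (hnonneg (m+1) (by omega) r hrT))]
            exact hpt r hr'
        -- compare the integrals
        have hmono := intervalIntegral.integral_mono_on h0.le hintf hintg hpt
        -- evaluate the dominating integral
        have hval : ∫ r in (0:ℝ)..t, (c * (r^mb * (t-r)^(β-1)) + c * r^(mb-α))
            = c * (t^(mb+β) * ∫ u in (0:ℝ)..1, u^mb * (1-u)^(β-1))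
              + c * (t^(mb-α+1)/(mb-α+1)) := by
          rw [intervalIntegral.integral_add (hint1.const_mul c) (hint2.const_mul c),
            intervalIntegral.integral_const_mul, intervalIntegral.integral_const_mul,
            rscaled mb β t hβ h0,
            integral_rpow (Or.inl (by rw [hβdef] at *; linarith))]
          rw [Real.zero_rpow (by rw [hβdef] at *; intro h; linarith)]
          ring
        -- bound the beta factors
        set J : ℝ := ∫ u in (0:ℝ)..1, u^(β-1) * (1-u)^((mb+β)-1) with hJdef
        have hJ1 : (∫ u in (0:ℝ)..1, u^mb * (1-u)^(β-1)) ≤ J := comp1 β mb hβ hβ1 hmb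
        have hJ2 : 1/(mb+β+α) ≤ J := comp2 β α mb hβ hβ1 hα.le hmb
        have hJpos : 0 < mb+β+α := by positivity
        have hJnn : 0 ≤ J := le_trans (by positivity) hJ2
        have htβ : (0:ℝ) ≤ t^(mb+β) := rpow_nonneg h0.le _
        have hexp : mb - α + 1 = mb + β + α := by rw [hβdef]; ring
        have hq : t^(mb-α+1)/(mb-α+1) ≤ t^(mb+β) * T^α * J := by
          rw [hexp]
          have ht1 : t^(mb+β+α) = t^(mb+β) * t^α := by rw [← Real.rpow_add h0]
          have ht2 : t^α ≤ T^α := rpow_le_rpow h0.le htT hα.le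
          calc t^(mb+β+α)/(mb+β+α) = t^(mb+β+α) * (1/(mb+β+α)) := by ring
            _ ≤ t^(mb+β+α) * J := by
                refine mul_le_mul_of_nonneg_left hJ2 (rpow_nonneg h0.le _)
            _ = t^(mb+β) * t^α * J := by rw [ht1]
            _ ≤ t^(mb+β) * T^α * J := by
                refine mul_le_mul_of_nonneg_right
                  (mul_le_mul_of_nonneg_left ht2 htβ) hJnn
        -- put everything together
        have key : φ (m+1+1) t ≤ A * (c * (1 + T^α) * J * t^(mb+β)) := by
          refine le_trans (hrec (m+1) (by omega) t ht) ?_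
          refine mul_le_mul_of_nonneg_left ?_ hA
          refine le_trans hmono ?_
          rw [hval]
          have b1 : c * (t^(mb+β) * ∫ u in (0:ℝ)..1, u^mb * (1-u)^(β-1))
              ≤ c * (t^(mb+β) * J) :=
            mul_le_mul_of_nonneg_left (mul_le_mul_of_nonneg_left hJ1 htβ) hc
          have b2 : c * (t^(mb-α+1)/(mb-α+1)) ≤ c * (t^(mb+β) * T^α * J) :=
            mul_le_mul_of_nonneg_left hq hc
          calc c * (t^(mb+β) * ∫ u in (0:ℝ)..1, u^mb * (1-u)^(β-1))
                + c * (t^(mb-α+1)/(mb-α+1))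
              ≤ c * (t^(mb+β) * J) + c * (t^(mb+β) * T^α * J) := add_le_add b1 b2
            _ = c * (1 + T^α) * J * t^(mb+β) := by ring
        -- identify J with Gamma quotient
        have hJval : J = Gamma β * Gamma (((m:ℝ)+1)*β) / Gamma (((m:ℝ)+1+1)*β) := by
          have h := rbeta β (((m:ℝ)+1)*β) hβ (by positivity)
          rw [hJdef, show (mb+β)-1 = ((m:ℝ)+1)*β-1 by rw [hmbdef]; ring, h,
            show β + ((m:ℝ)+1)*β = ((m:ℝ)+1+1)*β by ring]
        -- final algebra
        refine le_trans key (le_of_eq ?_)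
        push_cast
        rw [hJval, hcdef, show ((m:ℝ)+1)*β = mb+β by rw [hmbdef]; ring,
          hMdef, pow_succ]
        field_simp
  -- conclude
  intro n hn t ht
  obtain ⟨m, rfl⟩ : ∃ m, n = m + 1 := ⟨n - 1, by omega⟩
  have hQ := Q m t ht
  have hΓm1 : 0 < Gamma (((m:ℝ)+1)*β) := Real.Gamma_pos_of_pos (by positivity)
  have ht1 : t^((m:ℝ)*β) ≤ T^((m:ℝ)*β) := rpow_le_rpow ht.1 ht.2 (by positivity)
  have ht2 : T^((m:ℝ)*β) = (T^β)^m := by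
    rw [mul_comm, Real.rpow_mul hT.le, Real.rpow_natCast]
  have hfin : φ (m+1) t ≤ D * (Gamma β / Gamma (((m:ℝ)+1)*β)) * (M * Gamma β * T^β)^m := by
    calc φ (m+1) t ≤ D * (M * Gamma β)^m * (Gamma β / Gamma (((m:ℝ)+1)*β)) * t^((m:ℝ)*β) := hQ
      _ ≤ D * (M * Gamma β)^m * (Gamma β / Gamma (((m:ℝ)+1)*β)) * (T^β)^m := by
          refine mul_le_mul_of_nonneg_left (ht2 ▸ ht1) ?_
          exact mul_nonneg (mul_nonneg hD (pow_nonneg (mul_nonneg hM hΓβ.le) m))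
            (div_nonneg hΓβ.le hΓm1.le)
      _ = D * (Gamma β / Gamma (((m:ℝ)+1)*β)) * (M * Gamma β * T^β)^m := by
          have hmp : (M * Gamma β * T^β)^m = (M * Gamma β)^m * (T^β)^m := mul_pow _ _ _
          rw [hmp]; ring
  have hc1 : ((m+1:ℕ):ℝ) = (m:ℝ)+1 := by push_cast; ring
  have hc2 : (m+1)-1 = m := by omega
  rw [hc1, hc2]
  exact hfin
end

section
/- Let $a,b>0$ and let $\lambda \geq 1$ be a real number. Then $B(\lambda a, \lambda b) \leq B(a,b)$, i.e. $\frac{\Gamma(\lambda a)\Gamma(\lambda b)}{\Gamma(\lambda(a+b))} \leq \frac{\Gamma(a)\Gamma(b)}{\Gamma(a+b)}$. -/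
open Real MeasureTheory intervalIntegral

lemma beta_integrable {a b : ℝ} (ha : 0 < a) (hb : 0 < b) :
    IntervalIntegrable (fun t : ℝ => t ^ (a - 1) * (1 - t) ^ (b - 1)) volume 0 1 := by
  have h := Complex.betaIntegral_convergent (u := a) (v := b) (by simpa using ha) (by simpa using hb)
  have h2 : IntervalIntegrable
      (fun x : ℝ => ((x:ℂ) ^ ((a:ℂ) - 1) * (1 - (x:ℂ)) ^ ((b:ℂ) - 1)).re) volume 0 1 :=
    ⟨h.1.re, h.2.re⟩
  apply h2.congr
  intro x hx
  beta_reduce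
  rw [Set.uIoc_of_le (by norm_num : (0:ℝ) ≤ 1)] at hx
  have hx0 : (0:ℝ) ≤ x := le_of_lt hx.1
  have hx1 : (0:ℝ) ≤ 1 - x := by linarith [hx.2]
  rw [show ((a:ℂ) - 1) = ((a - 1 : ℝ) : ℂ) by push_cast; ring,
    show ((b:ℂ) - 1) = ((b - 1 : ℝ) : ℂ) by push_cast; ring,
    show (1 - (x:ℂ)) = ((1 - x : ℝ) : ℂ) by push_cast; ring,
    ← Complex.ofReal_cpow hx0, ← Complex.ofReal_cpow hx1, ← Complex.ofReal_mul,
    Complex.ofReal_re]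

lemma beta_eq {a b : ℝ} (ha : 0 < a) (hb : 0 < b) :
    Gamma a * Gamma b / Gamma (a + b)
      = ∫ t in (0:ℝ)..1, t ^ (a - 1) * (1 - t) ^ (b - 1) := by
  have hab : 0 < Gamma (a + b) := Gamma_pos_of_pos (by positivity)
  have h := Complex.Gamma_mul_Gamma_eq_betaIntegral (s := a) (t := b)
    (by simpa using ha) (by simpa using hb)
  have hbeta : Complex.betaIntegral a b
      = ((∫ t in (0:ℝ)..1, t ^ (a - 1) * (1 - t) ^ (b - 1) : ℝ) : ℂ) := by
    rw [Complex.betaIntegral, ← intervalIntegral.integral_ofReal]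
    apply intervalIntegral.integral_congr
    intro x hx
    rw [Set.uIcc_of_le (by norm_num : (0:ℝ) ≤ 1)] at hx
    have hx0 : (0:ℝ) ≤ x := hx.1
    have hx1 : (0:ℝ) ≤ 1 - x := by linarith [hx.2]
    simp only [Complex.ofReal_mul]
    rw [show ((a:ℂ) - 1) = ((a - 1 : ℝ) : ℂ) by push_cast; ring,
      show ((b:ℂ) - 1) = ((b - 1 : ℝ) : ℂ) by push_cast; ring,
      show (1 - (x:ℂ)) = ((1 - x : ℝ) : ℂ) by push_cast; ring,
      ← Complex.ofReal_cpow hx0, ← Complex.ofReal_cpow hx1]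
  rw [hbeta, ← Complex.ofReal_add, Complex.Gamma_ofReal, Complex.Gamma_ofReal,
    Complex.Gamma_ofReal] at h
  have hr : Gamma a * Gamma b
      = Gamma (a + b) * ∫ t in (0:ℝ)..1, t ^ (a - 1) * (1 - t) ^ (b - 1) := by
    exact_mod_cast h
  rw [div_eq_iff hab.ne', hr, mul_comm]

/-- Monotonicity of the Beta function under simultaneous scaling:
for `a, b > 0` and `λ ≥ 1`, `B(λa, λb) ≤ B(a, b)`. -/
theorem stmt_6 (a b l : ℝ) (ha : 0 < a) (hb : 0 < b) (hl : 1 ≤ l) :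
    Gamma (l * a) * Gamma (l * b) / Gamma (l * (a + b))
      ≤ Gamma a * Gamma b / Gamma (a + b) := by
  have hla : 0 < l * a := by positivity
  have hlb : 0 < l * b := by positivity
  rw [show l * (a + b) = l * a + l * b by ring, beta_eq hla hlb, beta_eq ha hb]
  apply intervalIntegral.integral_mono_ae_restrict (by norm_num) (beta_integrable hla hlb)
    (beta_integrable ha hb)
  have hfin : volume ({0, 1} : Set ℝ) = 0 := ((Set.finite_singleton 1).insert 0).measure_zero _
  filter_upwards [ae_restrict_mem measurableSet_Icc,
    ae_restrict_of_ae (compl_mem_ae_iff.mpr hfin)] with x hx hx'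
  simp only [Set.mem_insert_iff, Set.mem_singleton_iff, not_or] at hx'
  obtain ⟨hxa, hxb⟩ := hx
  have hx0 : 0 < x := lt_of_le_of_ne hxa (Ne.symm hx'.1)
  have hx1 : 0 < 1 - x := by
    rcases lt_or_eq_of_le hxb with h | h
    · linarith
    · exact absurd h hx'.2
  have key : x ^ (l * a - 1) * (1 - x) ^ (l * b - 1)
      = (x ^ (a - 1) * (1 - x) ^ (b - 1)) * ((x ^ a * (1 - x) ^ b) ^ (l - 1)) := by
    rw [show l * a - 1 = (a - 1) + a * (l - 1) by ring,
      show l * b - 1 = (b - 1) + b * (l - 1) by ring,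
      Real.rpow_add hx0, Real.rpow_add hx1,
      Real.rpow_mul hx0.le, Real.rpow_mul hx1.le,
      Real.mul_rpow (by positivity) (by positivity)]
    ring
  rw [key]
  have hle1 : (x ^ a * (1 - x) ^ b) ^ (l - 1) ≤ 1 := by
    apply Real.rpow_le_one (by positivity) ?_ (by linarith)
    calc x ^ a * (1 - x) ^ b ≤ 1 * 1 := by
          gcongr
          · exact Real.rpow_le_one hx0.le (by linarith) ha.le
          · exact Real.rpow_le_one hx1.le (by linarith) hb.le
      _ = 1 := by ring
  calc (x ^ (a - 1) * (1 - x) ^ (b - 1)) * ((x ^ a * (1 - x) ^ b) ^ (l - 1))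
      ≤ (x ^ (a - 1) * (1 - x) ^ (b - 1)) * 1 :=
        mul_le_mul_of_nonneg_left hle1 (by positivity)
    _ = x ^ (a - 1) * (1 - x) ^ (b - 1) := by ring
end

section
/- Let $a>\gamma>0$. Then for every real $x\geq 0$, $\sum_{k=1}^{\infty} \frac{\Gamma(k\gamma)}{\Gamma(ka)}\, x^{k-1} \;\leq\; B(\gamma, a-\gamma)\, \sum_{k=1}^{\infty} \frac{x^{k-1}}{\Gamma(k(a-\gamma))}$, and in particular the series on the left-hand side converges for every $x\geq 0$. -/
open Real

noncomputable def myBeta (u v : ℝ) : ℝ :=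
  ∫ t in (0:ℝ)..1, t ^ (u - 1) * (1 - t) ^ (v - 1)

lemma myBeta_complex (u v : ℝ) (hu : 0 < u) (hv : 0 < v) :
    Complex.betaIntegral u v = (myBeta u v : ℂ) := by
  rw [Complex.betaIntegral, myBeta, ← intervalIntegral.integral_ofReal]
  refine intervalIntegral.integral_congr fun x hx => ?_
  rw [Set.uIcc_of_le (zero_le_one : (0:ℝ) ≤ 1)] at hx
  rw [Complex.ofReal_mul, Complex.ofReal_cpow hx.1 (u - 1),
    Complex.ofReal_cpow (by linarith [hx.2] : (0:ℝ) ≤ 1 - x) (v - 1)]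
  push_cast
  ring

lemma myBeta_eq (u v : ℝ) (hu : 0 < u) (hv : 0 < v) :
    Gamma u * Gamma v = Gamma (u + v) * myBeta u v := by
  have h := Complex.Gamma_mul_Gamma_eq_betaIntegral
    (s := (u : ℂ)) (t := (v : ℂ)) (by simpa using hu) (by simpa using hv)
  rw [myBeta_complex u v hu hv, ← Complex.ofReal_add] at h
  simp only [Complex.Gamma_ofReal] at h
  exact_mod_cast h

lemma myBeta_integrable (u v : ℝ) (hu : 0 < u) (hv : 0 < v) :
    IntervalIntegrable (fun t : ℝ => t ^ (u - 1) * (1 - t) ^ (v - 1))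
      MeasureTheory.volume 0 1 := by
  have h := Complex.betaIntegral_convergent (u := (u:ℂ)) (v := (v:ℂ))
    (by simpa using hu) (by simpa using hv)
  rw [intervalIntegrable_iff_integrableOn_Ioc_of_le zero_le_one] at h ⊢
  refine (h.re).congr ?_
  refine (MeasureTheory.ae_restrict_iff' measurableSet_Ioc).2 (Filter.Eventually.of_forall ?_)
  intro x hx
  have e1 : ((x:ℂ)) ^ ((u:ℂ) - 1) = ((x ^ (u - 1) : ℝ) : ℂ) := by
    rw [Complex.ofReal_cpow hx.1.le]; push_cast; ring_nf
  have e2 : ((1:ℂ) - (x:ℂ)) ^ ((v:ℂ) - 1) = (((1 - x) ^ (v - 1) : ℝ) : ℂ) := by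
    rw [Complex.ofReal_cpow (by linarith [hx.2] : (0:ℝ) ≤ 1 - x)]; push_cast; ring_nf
  simp only [e1, e2, ← Complex.ofReal_mul]
  simp

lemma myBeta_mono {u v c : ℝ} (hu : 0 < u) (hv : 0 < v) (hc : 1 ≤ c) :
    myBeta (c * u) (c * v) ≤ myBeta u v := by
  refine intervalIntegral.integral_mono_ae_restrict zero_le_one
    (myBeta_integrable _ _ (by positivity) (by positivity)) (myBeta_integrable _ _ hu hv) ?_
  have key : ∀ b : ℝ, ∀ᵐ x ∂(MeasureTheory.volume.restrict (Set.Icc (0:ℝ) 1)), x ≠ b := by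
    intro b
    refine MeasureTheory.ae_restrict_of_ae (MeasureTheory.ae_iff.2 ?_)
    have : {x : ℝ | ¬ x ≠ b} = {b} := by ext y; simp
    rw [this]
    exact Real.volume_singleton
  have h0 := key 0
  have h1 := key 1
  have hmem : ∀ᵐ x ∂(MeasureTheory.volume.restrict (Set.Icc (0:ℝ) 1)), x ∈ Set.Icc (0:ℝ) 1 :=
    MeasureTheory.ae_restrict_mem measurableSet_Icc
  filter_upwards [h0, h1, hmem] with t ht0 ht1 htm
  have htpos : 0 < t := lt_of_le_of_ne htm.1 (Ne.symm ht0)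
  have htlt : t < 1 := lt_of_le_of_ne htm.2 ht1
  have h1t : 0 < 1 - t := by linarith
  have hA : t ^ (c * u - 1) ≤ t ^ (u - 1) :=
    rpow_le_rpow_of_exponent_ge htpos htlt.le (by nlinarith)
  have hB : (1 - t) ^ (c * v - 1) ≤ (1 - t) ^ (v - 1) :=
    rpow_le_rpow_of_exponent_ge h1t (by linarith) (by nlinarith)
  exact mul_le_mul hA hB (by positivity) (by positivity)

lemma gamma_conv {δ t : ℝ} (hδ0 : 0 < δ) (hδ1 : δ ≤ 1) (ht : 2 ≤ t) :
    t * Gamma t ≤ (t + δ) ^ (1 - δ) * Gamma (t + δ) := by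
  have ht0 : 0 < t := by linarith
  have htδ : 0 < t + δ := by linarith
  have hkey := Real.convexOn_log_Gamma.2 (Set.mem_Ioi.2 htδ)
    (Set.mem_Ioi.2 (by linarith : (0:ℝ) < t + δ + 1)) hδ0.le (by linarith : (0:ℝ) ≤ 1 - δ)
    (by ring)
  have hcomb : δ • (t + δ) + (1 - δ) • (t + δ + 1) = t + 1 := by
    simp only [smul_eq_mul]; ring
  rw [hcomb] at hkey
  simp only [Function.comp_apply, smul_eq_mul] at hkey
  rw [Real.Gamma_add_one ht0.ne'] at hkey
  have hΓt : 0 < Gamma t := Real.Gamma_pos_of_pos ht0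
  have hΓtδ : 0 < Gamma (t + δ) := Real.Gamma_pos_of_pos htδ
  rw [show t + δ + 1 = (t + δ) + 1 by ring, Real.Gamma_add_one htδ.ne'] at hkey
  rw [Real.log_mul ht0.ne' hΓt.ne', Real.log_mul htδ.ne' hΓtδ.ne'] at hkey
  have hexp : Real.log t + Real.log (Gamma t) ≤
      Real.log (t + δ) * (1 - δ) + Real.log (Gamma (t + δ)) := by nlinarith [hkey]
  have := Real.exp_le_exp.2 hexp
  rwa [Real.exp_add, Real.exp_add, Real.exp_log ht0, Real.exp_log hΓt, Real.exp_log hΓtδ,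
    Real.exp_mul, Real.exp_log htδ] at this

lemma gamma_ratio_le {δ t : ℝ} (hδ : 0 < δ) (ht : 2 ≤ t) :
    Gamma t / Gamma (t + δ) ≤ 2 * t ^ (-(min δ 1)) := by
  set ε := min δ 1 with hε
  have hε0 : 0 < ε := lt_min hδ one_pos
  have hε1 : ε ≤ 1 := min_le_right _ _
  have ht0 : 0 < t := by linarith
  have h1 : Gamma (t + ε) ≤ Gamma (t + δ) := by
    rcases eq_or_lt_of_le (min_le_left δ 1 : ε ≤ δ) with h | h
    · rw [show ε = δ from hε.trans h]
    · exact (Real.Gamma_strictMonoOn_Ici (by simp only [Set.mem_Ici]; linarith)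
        (by simp only [Set.mem_Ici]; linarith) (by linarith)).le
  have hΓtε : 0 < Gamma (t + ε) := Real.Gamma_pos_of_pos (by linarith)
  have hΓtδ : 0 < Gamma (t + δ) := Real.Gamma_pos_of_pos (by linarith)
  have h2 := gamma_conv hε0 hε1 ht
  -- Gamma t / Gamma (t+δ) ≤ Gamma t / Gamma (t+ε) ≤ (t+ε)^(1-ε)/t
  have h3 : Gamma t / Gamma (t + δ) ≤ (t + ε) ^ (1 - ε) / t := by
    rw [div_le_div_iff₀ hΓtδ ht0]
    calc Gamma t * t = t * Gamma t := by ring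
      _ ≤ (t + ε) ^ (1 - ε) * Gamma (t + ε) := h2
      _ ≤ (t + ε) ^ (1 - ε) * Gamma (t + δ) := by
          exact mul_le_mul_of_nonneg_left h1 (by positivity)
  refine h3.trans ?_
  have h4 : (t + ε) ^ (1 - ε) ≤ (2 * t) ^ (1 - ε) :=
    rpow_le_rpow (by linarith) (by linarith) (by linarith)
  have h5 : ((2:ℝ)) ^ (1 - ε) ≤ 2 := by
    calc (2:ℝ) ^ (1 - ε) ≤ (2:ℝ) ^ (1:ℝ) :=
        rpow_le_rpow_of_exponent_le one_le_two (by linarith)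
      _ = 2 := by rw [rpow_one]
  have h6 : (2 * t) ^ (1 - ε) = 2 ^ (1 - ε) * t ^ (1 - ε) :=
    Real.mul_rpow (by norm_num) ht0.le
  have h7 : t ^ (1 - ε) / t = t ^ (-ε) := by
    rw [div_eq_iff ht0.ne', ← Real.rpow_add_one ht0.ne']
    congr 1
    ring
  calc (t + ε) ^ (1 - ε) / t ≤ (2 * t) ^ (1 - ε) / t := by gcongr
      _ = 2 ^ (1 - ε) * (t ^ (1 - ε) / t) := by rw [h6]; ring
      _ = 2 ^ (1 - ε) * t ^ (-ε) := by rw [h7]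
      _ ≤ 2 * t ^ (-ε) := mul_le_mul_of_nonneg_right h5 (Real.rpow_nonneg ht0.le _)


lemma gamma_ratio_tendsto {δ : ℝ} (hδ : 0 < δ) :
    Filter.Tendsto (fun k : ℕ => Gamma (((k:ℝ) + 1) * δ) / Gamma (((k:ℝ) + 1) * δ + δ))
      Filter.atTop (nhds 0) := by
  set ε := min δ 1 with hε
  have hε0 : 0 < ε := lt_min hδ one_pos
  have htk : Filter.Tendsto (fun k : ℕ => ((k:ℝ) + 1) * δ) Filter.atTop Filter.atTop := by
    apply Filter.Tendsto.atTop_mul_const hδ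
    exact Filter.tendsto_atTop_add_const_right _ _ tendsto_natCast_atTop_atTop
  have hupper : Filter.Tendsto (fun k : ℕ => 2 * (((k:ℝ) + 1) * δ) ^ (-ε))
      Filter.atTop (nhds 0) := by
    have := (tendsto_rpow_neg_atTop hε0).comp htk
    simpa using this.const_mul 2
  refine tendsto_of_tendsto_of_tendsto_of_le_of_le' tendsto_const_nhds hupper ?_ ?_
  · filter_upwards [htk.eventually_ge_atTop 2] with k hk
    have h1 : 0 < ((k:ℝ) + 1) * δ := by linarith
    positivity
  · filter_upwards [htk.eventually_ge_atTop 2] with k hk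
    exact gamma_ratio_le hδ hk

lemma ml_summable {δ x : ℝ} (hδ : 0 < δ) (hx : 0 ≤ x) :
    Summable (fun k : ℕ => x ^ k / Gamma (((k:ℝ) + 1) * δ)) := by
  refine summable_of_ratio_norm_eventually_le (r := 1/2) (by norm_num) ?_
  have h := (gamma_ratio_tendsto hδ).const_mul x
  rw [mul_zero] at h
  filter_upwards [h.eventually_lt_const (by norm_num : (0:ℝ) < 1/2)] with k hk
  have hΓ1 : 0 < Gamma (((k:ℝ) + 1) * δ) := Real.Gamma_pos_of_pos (by positivity)
  have hΓ2 : 0 < Gamma ((((k:ℕ)+1:ℕ):ℝ) * δ + δ) := by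
    push_cast
    exact Real.Gamma_pos_of_pos (by positivity)
  have hc : ((((k:ℕ)+1:ℕ)+1:ℝ)) * δ = ((k:ℝ) + 1) * δ + δ := by push_cast; ring
  rw [Real.norm_eq_abs, Real.norm_eq_abs, abs_of_nonneg (by positivity),
    abs_of_nonneg (by positivity)]
  push_cast
  rw [show ((k:ℝ) + 1 + 1) * δ = ((k:ℝ) + 1) * δ + δ by ring]
  set Γ1 := Gamma (((k:ℝ) + 1) * δ)
  set Γ2 := Gamma (((k:ℝ) + 1) * δ + δ)
  have hΓ2' : 0 < Γ2 := by
    refine Real.Gamma_pos_of_pos ?_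
    positivity
  calc x ^ (k+1) / Γ2 = x ^ k * (x * (Γ1 / Γ2)) / Γ1 := by
        field_simp
        ring
    _ ≤ x ^ k * (1/2) / Γ1 := by gcongr
    _ = 1/2 * (x ^ k / Γ1) := by ring

/-- Comparison of `∑_{k≥1} Γ(kγ)/Γ(ka) x^{k-1}` with the Mittag-Leffler-type series
`B(γ, a-γ) ∑_{k≥1} x^{k-1}/Γ(k(a-γ))`, for `a > γ > 0`. -/
theorem stmt_8 (a γ : ℝ) (hγ : 0 < γ) (hγa : γ < a) :
    ∀ x : ℝ, 0 ≤ x →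
      Summable (fun k : ℕ => Gamma ((k+1 : ℕ) * γ) / Gamma ((k+1 : ℕ) * a) * x ^ k) ∧
      ∑' k : ℕ, Gamma ((k+1 : ℕ) * γ) / Gamma ((k+1 : ℕ) * a) * x ^ k
        ≤ (Gamma γ * Gamma (a - γ) / Gamma a)
            * ∑' k : ℕ, x ^ k / Gamma ((k+1 : ℕ) * (a - γ)) := by
  intro x hx
  set δ := a - γ with hδdef
  have hδ : 0 < δ := by rw [hδdef]; linarith
  have ha : 0 < a := by linarith
  have hB0 : 0 ≤ Gamma γ * Gamma δ / Gamma a := by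
    have := Real.Gamma_pos_of_pos hγ
    have := Real.Gamma_pos_of_pos hδ
    have := Real.Gamma_pos_of_pos ha
    positivity
  -- termwise bound
  have key : ∀ k : ℕ, Gamma (((k:ℝ)+1) * γ) / Gamma (((k:ℝ)+1) * a) * x ^ k
      ≤ Gamma γ * Gamma δ / Gamma a * (x ^ k / Gamma (((k:ℝ)+1) * δ)) := by
    intro k
    set c : ℝ := (k:ℝ) + 1 with hc
    have hc1 : 1 ≤ c := by rw [hc]; have := Nat.cast_nonneg (α := ℝ) k; linarith
    have hc0 : 0 < c := by linarith
    have hΓcγ : 0 < Gamma (c * γ) := Real.Gamma_pos_of_pos (by positivity)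
    have hΓcδ : 0 < Gamma (c * δ) := Real.Gamma_pos_of_pos (by positivity)
    have hΓca : 0 < Gamma (c * a) := Real.Gamma_pos_of_pos (by positivity)
    have hΓγ : 0 < Gamma γ := Real.Gamma_pos_of_pos hγ
    have hΓδ : 0 < Gamma δ := Real.Gamma_pos_of_pos hδ
    have hΓa : 0 < Gamma a := Real.Gamma_pos_of_pos ha
    have h1 : Gamma (c * γ) * Gamma (c * δ) = Gamma (c * a) * myBeta (c * γ) (c * δ) := by
      have := myBeta_eq (c * γ) (c * δ) (by positivity) (by positivity)
      rwa [show c * γ + c * δ = c * a by rw [hδdef]; ring] at this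
    have h2 : Gamma γ * Gamma δ = Gamma a * myBeta γ δ := by
      have := myBeta_eq γ δ hγ hδ
      rwa [show γ + δ = a by rw [hδdef]; ring] at this
    have h3 : myBeta (c * γ) (c * δ) ≤ myBeta γ δ := myBeta_mono hγ hδ hc1
    have hmain : Gamma (c * γ) / Gamma (c * a)
        ≤ Gamma γ * Gamma δ / Gamma a / Gamma (c * δ) := by
      rw [div_le_div_iff₀ hΓca (by positivity)]
      have h2' : Gamma γ * Gamma δ / Gamma a = myBeta γ δ := by
        rw [h2]; field_simp
      rw [h2']
      calc Gamma (c * γ) * Gamma (c * δ) = Gamma (c * a) * myBeta (c * γ) (c * δ) := h1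
        _ ≤ Gamma (c * a) * myBeta γ δ := by
            refine mul_le_mul_of_nonneg_left h3 hΓca.le
        _ = myBeta γ δ * Gamma (c * a) := by ring
    calc Gamma (c * γ) / Gamma (c * a) * x ^ k
        ≤ Gamma γ * Gamma δ / Gamma a / Gamma (c * δ) * x ^ k := by
          exact mul_le_mul_of_nonneg_right hmain (pow_nonneg hx k)
      _ = Gamma γ * Gamma δ / Gamma a * (x ^ k / Gamma (c * δ)) := by ring
  have hsum2 : Summable (fun k : ℕ => x ^ k / Gamma (((k:ℝ)+1) * δ)) := ml_summable hδ hx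
  have hsum2' : Summable (fun k : ℕ => Gamma γ * Gamma δ / Gamma a
      * (x ^ k / Gamma (((k:ℝ)+1) * δ))) := hsum2.mul_left _
  have hsum1 : Summable (fun k : ℕ => Gamma (((k:ℝ)+1) * γ) / Gamma (((k:ℝ)+1) * a) * x ^ k) := by
    refine Summable.of_nonneg_of_le (fun k => ?_) key hsum2'
    have := Real.Gamma_pos_of_pos (show (0:ℝ) < ((k:ℝ)+1) * γ by positivity)
    have := Real.Gamma_pos_of_pos (show (0:ℝ) < ((k:ℝ)+1) * a by positivity)
    positivity
  have hcast : ∀ k : ℕ, ((k+1 : ℕ) : ℝ) = (k:ℝ) + 1 := fun k => by push_cast; ring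
  constructor
  · simpa only [hcast] using hsum1
  · have hle := Summable.tsum_le_tsum key hsum1 hsum2'
    rw [tsum_mul_left] at hle
    simpa only [hcast] using hle
end

section
/- For a permutation $\sigma$ of $\{1,\dots,k\}$, let $e(\sigma)$ denote the number of descents of $\sigma$, i.e. the cardinality of $\{ j \in \{1,\dots,k-1\} : \sigma(j) > \sigma(j+1) \}$. Then there exists a constant $C>0$ such that for every integer $k\geq 1$, $\sum_{\sigma \in \mathcal{S}_k} \frac{1}{k^{2}\binom{k-1}{e(\sigma)}} \;\leq\; \frac{C}{2^{k}}\, k!\, \sqrt{k}$. -/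
open Finset

/-- The cycle on positions `[a, j+1]` in `Fin (n+1)`: `a↦a+1↦⋯↦j+1↦a`. -/
def rot (n a j : ℕ) (haj : a ≤ j) (hj : j + 1 ≤ n) : Equiv.Perm (Fin (n+1)) where
  toFun x := if h : a ≤ x.val ∧ x.val ≤ j then ⟨x.val+1, by omega⟩
             else if x.val = j+1 then ⟨a, by omega⟩ else x
  invFun y := if h : a + 1 ≤ y.val ∧ y.val ≤ j+1 then ⟨y.val-1, by omega⟩
              else if y.val = a then ⟨j+1, by omega⟩ else y
  left_inv x := by
    dsimp only
    split_ifs with h1 h2 h3 h4 h5 h6 h7 <;>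
      first
        | rfl
        | (apply Fin.ext; try simp only [Fin.val_mk] at *; simp_all; try omega)
  right_inv y := by
    dsimp only
    split_ifs with h1 h2 h3 h4 h5 h6 h7 <;>
      first
        | rfl
        | (apply Fin.ext; try simp only [Fin.val_mk] at *; simp_all; try omega)

lemma rot_val (n a j : ℕ) (haj : a ≤ j) (hj : j + 1 ≤ n) (x : Fin (n+1)) :
    (rot n a j haj hj x).val
      = if a ≤ x.val ∧ x.val ≤ j then x.val+1 else if x.val = j+1 then a else x.val := by
  show (if h : a ≤ x.val ∧ x.val ≤ j then (⟨x.val+1, by omega⟩ : Fin (n+1))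
        else if x.val = j+1 then ⟨a, by omega⟩ else x).val = _
  split_ifs <;> rfl

set_option maxHeartbeats 2000000 in
/-- permutations ascending at every position of `S` -/
def ascSet (n : ℕ) (S : Finset (Fin n)) : Finset (Equiv.Perm (Fin (n+1))) :=
  univ.filter (fun σ => ∀ p ∈ S, σ p.castSucc < σ p.succ)


set_option maxHeartbeats 2000000 in
lemma step_asc (n : ℕ) (S : Finset (Fin n)) (j : Fin n) (hjS : j ∈ S)
    (hmax : ∀ p ∈ S, p.val ≤ j.val) (a : ℕ) (haj : a ≤ j.val)
    (hQa : ∀ i, a ≤ i → i ≤ j.val → ∃ h : i < n, (⟨i, h⟩ : Fin n) ∈ S)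
    (hmin : ∀ i : Fin n, i.val + 1 = a → i ∉ S) :
    2 * (ascSet n S).card ≤ (ascSet n (S.erase j)).card := by
  classical
  set c := rot n a j.val haj j.isLt with hcdef
  set Ψ : Equiv.Perm (Fin (n+1)) → Equiv.Perm (Fin (n+1)) := fun σ => σ * c with hΨdef
  have hΨinj : Function.Injective Ψ := fun σ τ h => mul_right_cancel h
  have hmemA : ∀ σ, σ ∈ ascSet n S ↔ ∀ p ∈ S, σ p.castSucc < σ p.succ := by
    intro σ; simp [ascSet]
  have hmemB : ∀ σ, σ ∈ ascSet n (S.erase j) ↔ ∀ p ∈ S.erase j, σ p.castSucc < σ p.succ := by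
    intro σ; simp [ascSet]
  have hrun : ∀ σ ∈ ascSet n S, ∀ i (h1 : a ≤ i) (h2 : i ≤ j.val),
      σ ⟨i, by omega⟩ < σ ⟨i+1, by omega⟩ := by
    intro σ hσ i h1 h2
    obtain ⟨hi, hmem⟩ := hQa i h1 h2
    have := (hmemA σ).1 hσ _ hmem
    simpa [Fin.castSucc_mk, Fin.succ_mk] using this
  have hchain : ∀ σ ∈ ascSet n S, σ ⟨a, by omega⟩ < σ ⟨j.val+1, by omega⟩ := by
    intro σ hσ
    have : ∀ i, a + 1 ≤ i → (h : i ≤ j.val + 1) → σ ⟨a, by omega⟩ < σ ⟨i, by omega⟩ := by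
      intro i
      induction i with
      | zero => omega
      | succ i ihi =>
        intro h1 h2
        rcases Nat.lt_or_ge a i with hai | hai
        · exact lt_trans (ihi (by omega) (by omega)) (hrun σ hσ i (by omega) (by omega))
        · have : a = i := by omega
          subst this
          exact hrun σ hσ a (le_refl _) (by omega)
    exact this (j.val+1) (by omega) (le_refl _)
  have hΨval : ∀ (σ : Equiv.Perm (Fin (n+1))) (x : Fin (n+1)), Ψ σ x = σ (c x) := by
    intro σ x; rfl
  have hcj1 : c j.succ = ⟨a, by omega⟩ := by
    apply Fin.ext
    rw [hcdef, rot_val]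
    simp only [Fin.val_succ]
    split_ifs <;> omega
  have hcj : c j.castSucc = ⟨j.val+1, by omega⟩ := by
    apply Fin.ext
    rw [hcdef, rot_val]
    simp only [Fin.coe_castSucc]
    split_ifs <;> omega
  have himg : ∀ σ ∈ ascSet n S, Ψ σ ∈ ascSet n (S.erase j) ∧ Ψ σ j.succ < Ψ σ j.castSucc := by
    intro σ hσ
    constructor
    · rw [hmemB]
      intro p hp
      have hpS : p ∈ S := mem_of_mem_erase hp
      have hpj : p ≠ j := ne_of_mem_erase hp
      have hple : p.val ≤ j.val := hmax p hpS
      have hplt : p.val < j.val := lt_of_le_of_ne hple (fun h => hpj (Fin.ext h))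
      rw [hΨval, hΨval]
      rcases Nat.lt_or_ge p.val a with hpa | hpa
      · rcases Nat.lt_or_ge (p.val+1) a with hpa1 | hpa1
        · have hfix1 : c p.castSucc = p.castSucc := by
            apply Fin.ext
            rw [hcdef, rot_val]
            simp only [Fin.coe_castSucc]
            split_ifs <;> omega
          have hfix2 : c p.succ = p.succ := by
            apply Fin.ext
            rw [hcdef, rot_val]
            simp only [Fin.val_succ]
            split_ifs <;> omega
          rw [hfix1, hfix2]
          exact (hmemA σ).1 hσ _ hpS
        · exact absurd hpS (hmin p (by omega))
      · have hsh1 : c p.castSucc = p.succ := by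
          apply Fin.ext
          rw [hcdef, rot_val]
          simp only [Fin.coe_castSucc, Fin.val_succ]
          split_ifs <;> omega
        have hsh2 : c p.succ = ⟨p.val+2, by omega⟩ := by
          apply Fin.ext
          rw [hcdef, rot_val]
          simp only [Fin.val_succ]
          split_ifs <;> omega
        rw [hsh1, hsh2]
        have := hrun σ hσ (p.val+1) (by omega) (by omega)
        exact this
    · rw [hΨval, hΨval, hcj1, hcj]
      exact hchain σ hσ
  have hAB : ascSet n S ⊆ ascSet n (S.erase j) := by
    intro σ hσ
    rw [hmemB]
    intro p hp
    exact (hmemA σ).1 hσ _ (mem_of_mem_erase hp)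
  have hdisj : Disjoint (ascSet n S) ((ascSet n S).image Ψ) := by
    rw [disjoint_left]
    intro σ hσ hσ'
    obtain ⟨τ, hτ, hτe⟩ := mem_image.1 hσ'
    have hdesc := (himg τ hτ).2
    rw [hτe] at hdesc
    have hasc := (hmemA σ).1 hσ _ hjS
    exact absurd hasc (not_lt.2 (le_of_lt hdesc))
  have hsub : ascSet n S ∪ (ascSet n S).image Ψ ⊆ ascSet n (S.erase j) := by
    apply union_subset hAB
    intro σ hσ
    obtain ⟨τ, hτ, hτe⟩ := mem_image.1 hσ
    rw [← hτe]
    exact (himg τ hτ).1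
  have h1 := card_le_card hsub
  rw [card_union_of_disjoint hdisj, card_image_of_injective _ hΨinj] at h1
  omega


set_option maxHeartbeats 2000000 in
lemma key_asc (n : ℕ) (S : Finset (Fin n)) :
    (ascSet n S).card * 2 ^ S.card ≤ (n+1).factorial := by
  classical
  induction S using Finset.strongInduction with
  | _ S ih =>
  rcases S.eq_empty_or_nonempty with rfl | hS
  · simp only [card_empty, pow_zero, mul_one]
    calc (ascSet n ∅).card ≤ (univ : Finset (Equiv.Perm (Fin (n+1)))).card :=
          card_filter_le _ _
    _ = (n+1).factorial := by rw [card_univ, Fintype.card_perm, Fintype.card_fin]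
  · set j := S.max' hS with hjdef
    have hjS : j ∈ S := S.max'_mem hS
    have hmax : ∀ p ∈ S, p.val ≤ j.val := fun p hp => S.le_max' p hp
    set Q : ℕ → Prop := fun m => ∀ i, m ≤ i → i ≤ j.val → ∃ h : i < n, (⟨i, h⟩ : Fin n) ∈ S
      with hQdef
    have hQj : Q j.val := by
      intro i h1 h2
      have : i = j.val := le_antisymm h2 h1
      subst this
      exact ⟨j.isLt, by simpa using hjS⟩
    set a := Nat.find ⟨j.val, hQj⟩ with hadef
    have hQa : Q a := Nat.find_spec ⟨j.val, hQj⟩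
    have haj : a ≤ j.val := Nat.find_min' _ hQj
    have hmin : ∀ i : Fin n, i.val + 1 = a → i ∉ S := by
      intro i hia hmem
      have hlt : a - 1 < a := by omega
      have : ¬ Q (a-1) := Nat.find_min _ hlt
      apply this
      intro i' h1 h2
      rcases Nat.lt_or_ge i' a with hia' | hia'
      · have : i' = i.val := by omega
        subst this
        exact ⟨i.isLt, by simpa using hmem⟩
      · exact hQa i' hia' h2
    have hstep := step_asc n S j hjS hmax a haj hQa hmin
    have hccard : S.card = (S.erase j).card + 1 := by
      rw [card_erase_of_mem hjS]
      have : 1 ≤ S.card := card_pos.2 hS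
      omega
    calc (ascSet n S).card * 2 ^ S.card
        = (2 * (ascSet n S).card) * 2 ^ (S.erase j).card := by rw [hccard]; ring
      _ ≤ (ascSet n (S.erase j)).card * 2 ^ (S.erase j).card :=
          Nat.mul_le_mul_right _ hstep
      _ ≤ (n+1).factorial := ih _ (erase_ssubset hjS)

lemma asc_iff_not_desc {n : ℕ} (σ : Equiv.Perm (Fin (n+1))) (p : Fin n) :
    σ p.castSucc < σ p.succ ↔ ¬ (σ p.succ < σ p.castSucc) := by
  constructor
  · intro h; exact not_lt.2 (le_of_lt h)
  · intro h
    rcases lt_trichotomy (σ p.castSucc) (σ p.succ) with h1 | h1 | h1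
    · exact h1
    · exfalso
      have h2 : p.castSucc = p.succ := σ.injective h1
      have h3 : p.castSucc < p.succ := Fin.castSucc_lt_succ
      rw [h2] at h3
      exact lt_irrefl _ h3
    · exact absurd h1 h

def dscSet (n : ℕ) (S : Finset (Fin n)) : Finset (Equiv.Perm (Fin (n+1))) :=
  univ.filter (fun σ => ∀ p ∈ S, σ p.succ < σ p.castSucc)

lemma key_desc (n : ℕ) (S : Finset (Fin n)) :
    (dscSet n S).card * 2 ^ S.card ≤ (n+1).factorial := by
  classical
  have hinj : Function.Injective (fun σ : Equiv.Perm (Fin (n+1)) => Fin.revPerm * σ) :=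
    fun σ τ h => mul_left_cancel h
  have hcard : (dscSet n S).card ≤ (ascSet n S).card := by
    apply Finset.card_le_card_of_injOn (fun σ => Fin.revPerm * σ)
    · intro σ hσ
      simp only [dscSet, mem_coe, mem_filter, mem_univ, true_and] at hσ
      simp only [ascSet, mem_coe, mem_filter, mem_univ, true_and]
      intro p hp
      have := hσ p hp
      simpa [Equiv.Perm.mul_apply, Fin.rev_lt_rev] using this
    · exact fun a _ b _ h => hinj h
  calc (dscSet n S).card * 2 ^ S.card ≤ (ascSet n S).card * 2 ^ S.card :=
        Nat.mul_le_mul_right _ hcard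
    _ ≤ (n+1).factorial := key_asc n S

lemma subset_sum (n : ℕ) (x y : ℝ) :
    ∑ T ∈ (univ : Finset (Fin n)).powerset, x ^ T.card * y ^ (n - T.card) = (x+y)^n := by
  classical
  have h := Finset.prod_add (fun _ : Fin n => x) (fun _ : Fin n => y) univ
  rw [prod_const, card_univ, Fintype.card_fin] at h
  rw [h]
  apply Finset.sum_congr rfl
  intro T hT
  rw [prod_const, prod_const, card_sdiff_of_subset (mem_powerset.1 hT), card_univ, Fintype.card_fin]

lemma bern_half (n : ℕ) (u v : ℝ) (hu : 0 ≤ u) (hv : 0 ≤ v)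
    (P : Equiv.Perm (Fin (n+1)) → Fin n → Prop) [∀ σ p, Decidable (P σ p)]
    (hcount : ∀ T : Finset (Fin n),
      ((univ.filter (fun σ : Equiv.Perm (Fin (n+1)) => ∀ p ∈ T, P σ p)).card) * 2^T.card
        ≤ (n+1).factorial) :
    ∑ σ : Equiv.Perm (Fin (n+1)), ∏ p : Fin n, ((if P σ p then v else 0) + u)
      ≤ ((n+1).factorial : ℝ) * (v/2 + u)^n := by
  classical
  have hexp : ∀ σ : Equiv.Perm (Fin (n+1)),
      ∏ p : Fin n, ((if P σ p then v else 0) + u)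
        = ∑ T ∈ (univ : Finset (Fin n)).powerset,
            (if (∀ p ∈ T, P σ p) then v ^ T.card else 0) * u ^ (n - T.card) := by
    intro σ
    rw [Finset.prod_add]
    apply Finset.sum_congr rfl
    intro T hT
    have h1 : ∏ p ∈ T, (if P σ p then v else 0)
        = if (∀ p ∈ T, P σ p) then v ^ T.card else 0 := by
      by_cases h : ∀ p ∈ T, P σ p
      · rw [if_pos h, Finset.prod_congr rfl (fun p hp => if_pos (h p hp)), prod_const]
      · rw [if_neg h]
        push_neg at h
        obtain ⟨p, hp, hnp⟩ := h
        exact Finset.prod_eq_zero hp (if_neg hnp)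
    rw [h1, prod_const, card_sdiff_of_subset (mem_powerset.1 hT), card_univ, Fintype.card_fin]
  rw [Finset.sum_congr rfl (fun σ _ => hexp σ), Finset.sum_comm]
  have hterm : ∀ T ∈ (univ : Finset (Fin n)).powerset,
      ∑ σ : Equiv.Perm (Fin (n+1)),
          (if (∀ p ∈ T, P σ p) then v ^ T.card else 0) * u ^ (n - T.card)
        ≤ ((n+1).factorial : ℝ) * ((v/2) ^ T.card * u ^ (n - T.card)) := by
    intro T _
    rw [← Finset.sum_mul, ← Finset.sum_filter, Finset.sum_const, nsmul_eq_mul]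
    have hc : ((univ.filter (fun σ : Equiv.Perm (Fin (n+1)) => ∀ p ∈ T, P σ p)).card : ℝ)
        ≤ ((n+1).factorial : ℝ) / 2 ^ T.card := by
      rw [le_div_iff₀ (by positivity)]
      exact_mod_cast hcount T
    calc ((univ.filter (fun σ : Equiv.Perm (Fin (n+1)) => ∀ p ∈ T, P σ p)).card : ℝ)
          * v ^ T.card * u ^ (n - T.card)
        ≤ (((n+1).factorial : ℝ) / 2 ^ T.card) * v ^ T.card * u ^ (n - T.card) := by
          apply mul_le_mul_of_nonneg_right (mul_le_mul_of_nonneg_right hc (by positivity))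
            (by positivity)
      _ = ((n+1).factorial : ℝ) * ((v/2) ^ T.card * u ^ (n - T.card)) := by
          rw [div_pow]
          ring
  calc ∑ T ∈ (univ : Finset (Fin n)).powerset, ∑ σ : Equiv.Perm (Fin (n+1)),
          (if (∀ p ∈ T, P σ p) then v ^ T.card else 0) * u ^ (n - T.card)
      ≤ ∑ T ∈ (univ : Finset (Fin n)).powerset,
          ((n+1).factorial : ℝ) * ((v/2) ^ T.card * u ^ (n - T.card)) :=
        Finset.sum_le_sum hterm
    _ = ((n+1).factorial : ℝ) * (v/2 + u)^n := by
        rw [← Finset.mul_sum, subset_sum]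

lemma beta_int (m p : ℕ) :
    ∫ x in (0:ℝ)..1, x ^ m * (1 - x) ^ p
      = (m.factorial * p.factorial : ℝ) / (m + p + 1).factorial := by
  induction p generalizing m with
  | zero =>
    have h0 : ∫ x in (0:ℝ)..1, x^m*(1-x)^0 = 1/((m:ℝ)+1) := by simp [integral_pow]
    rw [h0, Nat.add_zero, Nat.factorial_succ, Nat.factorial_zero]
    push_cast
    rw [div_eq_div_iff (by positivity) (by positivity)]
    ring
  | succ p ih =>
    have key :
        ∫ x in (0:ℝ)..1, (1 - x) ^ (p+1) * x ^ m
          = ((p:ℝ)+1)/((m:ℝ)+1) * ∫ x in (0:ℝ)..1, x ^ (m+1) * (1 - x) ^ p := by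
      have h := intervalIntegral.integral_mul_deriv_eq_deriv_mul
        (u := fun x : ℝ => (1 - x) ^ (p+1)) (u' := fun x : ℝ => -((p:ℝ)+1) * (1 - x) ^ p)
        (v := fun x : ℝ => x ^ (m+1) / ((m:ℝ)+1)) (v' := fun x : ℝ => x ^ m)
        (a := 0) (b := 1)
        (fun x _ => by
          have h1 : HasDerivAt (fun x : ℝ => 1 - x) (-1) x := by
            simpa using (hasDerivAt_id' x).const_sub (1:ℝ)
          have := (hasDerivAt_pow (p+1) (1 - x)).comp x h1
          apply this.congr_deriv
          push_cast; ring)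
        (fun x _ => by
          have := (hasDerivAt_pow (m+1) x).div_const ((m:ℝ)+1)
          apply this.congr_deriv
          push_cast; field_simp)
        (by apply Continuous.intervalIntegrable; continuity)
        (by apply Continuous.intervalIntegrable; continuity)
      rw [h]
      simp only [one_pow, sub_self, zero_pow (Nat.succ_ne_zero p)]
      rw [intervalIntegral.integral_congr (g := fun x : ℝ => -(((p:ℝ)+1) * (x ^ (m+1)/((m:ℝ)+1) * (1-x)^p))) (by intro x _; ring)]
      rw [intervalIntegral.integral_neg, intervalIntegral.integral_const_mul]
      rw [intervalIntegral.integral_congr (g := fun x : ℝ => (1/((m:ℝ)+1)) * (x ^ (m+1) * (1-x)^p)) (by intro x _; ring)]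
      rw [intervalIntegral.integral_const_mul]
      ring
    have e1 : ∫ x in (0:ℝ)..1, x ^ m * (1 - x) ^ (p+1)
        = ∫ x in (0:ℝ)..1, (1 - x) ^ (p+1) * x ^ m := by
      apply intervalIntegral.integral_congr; intro x _; ring
    rw [e1, key, ih (m+1)]
    have harr : m + 1 + p + 1 = m + (p+1) + 1 := by ring
    rw [harr]
    rw [div_mul_div_comm, div_eq_div_iff (by positivity) (by positivity)]
    push_cast [Nat.factorial_succ]
    ring

def dsc {n : ℕ} (σ : Equiv.Perm (Fin (n+1))) : ℕ :=
  (univ.filter (fun p : Fin n => σ p.succ < σ p.castSucc)).card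

lemma dsc_le {n : ℕ} (σ : Equiv.Perm (Fin (n+1))) : dsc σ ≤ n := by
  calc dsc σ ≤ (univ : Finset (Fin n)).card := card_filter_le _ _
    _ = n := by simp

lemma bern (n : ℕ) (t : ℝ) (h0 : 0 ≤ t) (h1 : t ≤ 1) :
    ∑ σ : Equiv.Perm (Fin (n+1)), t ^ dsc σ * (1-t) ^ (n - dsc σ)
      ≤ ((n+1).factorial : ℝ) / 2 ^ n := by
  classical
  have hprod : ∀ σ : Equiv.Perm (Fin (n+1)),
      t ^ dsc σ * (1-t) ^ (n - dsc σ)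
        = ∏ p : Fin n, (if σ p.succ < σ p.castSucc then t else 1-t) := by
    intro σ
    rw [Finset.prod_ite (fun _ => t) (fun _ => (1-t)), prod_const, prod_const]
    have hsplit := Finset.card_filter_add_card_filter_not
      (s := (univ : Finset (Fin n))) (fun p : Fin n => σ p.succ < σ p.castSucc)
    rw [card_univ, Fintype.card_fin] at hsplit
    have h2 : (univ.filter (fun p : Fin n => ¬ σ p.succ < σ p.castSucc)).card = n - dsc σ := by
      unfold dsc; omega
    rw [h2]
    rfl
  rcases le_or_gt t (1/2) with ht | ht
  · have hfac : ∀ (σ : Equiv.Perm (Fin (n+1))) (p : Fin n),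
        (if σ p.succ < σ p.castSucc then t else 1-t)
          = (if σ p.castSucc < σ p.succ then 1-2*t else 0) + t := by
      intro σ p
      by_cases h : σ p.succ < σ p.castSucc
      · rw [if_pos h, if_neg (fun hc => (asc_iff_not_desc σ p).1 hc h)]
        ring
      · rw [if_neg h, if_pos ((asc_iff_not_desc σ p).2 h)]
        ring
    have := bern_half n t (1-2*t) h0 (by linarith)
      (fun σ p => σ p.castSucc < σ p.succ) (fun T => key_asc n T)
    rw [Finset.sum_congr rfl (fun σ _ => by rw [hprod σ,
      Finset.prod_congr rfl (fun p _ => hfac σ p)])]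
    calc ∑ σ : Equiv.Perm (Fin (n+1)),
            ∏ p : Fin n, ((if σ p.castSucc < σ p.succ then 1-2*t else 0) + t)
        ≤ ((n+1).factorial : ℝ) * ((1-2*t)/2 + t)^n := this
      _ = ((n+1).factorial : ℝ) / 2 ^ n := by
          have : (1-2*t)/2 + t = 1/2 := by ring
          rw [this, div_pow, one_pow, mul_one_div]
  · have hfac : ∀ (σ : Equiv.Perm (Fin (n+1))) (p : Fin n),
        (if σ p.succ < σ p.castSucc then t else 1-t)
          = (if σ p.succ < σ p.castSucc then 2*t-1 else 0) + (1-t) := by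
      intro σ p
      by_cases h : σ p.succ < σ p.castSucc
      · rw [if_pos h, if_pos h]; ring
      · rw [if_neg h, if_neg h]; ring
    have := bern_half n (1-t) (2*t-1) (by linarith) (by linarith)
      (fun σ p => σ p.succ < σ p.castSucc) (fun T => key_desc n T)
    rw [Finset.sum_congr rfl (fun σ _ => by rw [hprod σ,
      Finset.prod_congr rfl (fun p _ => hfac σ p)])]
    calc ∑ σ : Equiv.Perm (Fin (n+1)),
            ∏ p : Fin n, ((if σ p.succ < σ p.castSucc then 2*t-1 else 0) + (1-t))
        ≤ ((n+1).factorial : ℝ) * ((2*t-1)/2 + (1-t))^n := this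
      _ = ((n+1).factorial : ℝ) / 2 ^ n := by
          have : (2*t-1)/2 + (1-t) = 1/2 := by ring
          rw [this, div_pow, one_pow, mul_one_div]


lemma integrable_aux (m : ℕ) (σ : Equiv.Perm (Fin (m+1))) :
    IntervalIntegrable (fun x : ℝ => x ^ dsc σ * (1-x) ^ (m - dsc σ))
      MeasureTheory.volume 0 1 := by
  apply Continuous.intervalIntegrable
  exact (continuous_pow _).mul ((continuous_const.sub continuous_id).pow _)

set_option maxHeartbeats 1600000 in
lemma sum_integral_bound (m : ℕ) :
    ∑ σ : Equiv.Perm (Fin (m+1)), ∫ x in (0:ℝ)..1, x ^ dsc σ * (1-x) ^ (m - dsc σ)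
      ≤ ((m+1).factorial : ℝ) / 2 ^ m := by
  rw [← intervalIntegral.integral_finset_sum (fun σ _ => integrable_aux m σ)]
  have hmono : (∫ x in (0:ℝ)..1, ∑ σ : Equiv.Perm (Fin (m+1)),
        x ^ dsc σ * (1-x) ^ (m - dsc σ))
      ≤ ∫ x in (0:ℝ)..1, ((m+1).factorial : ℝ) / 2 ^ m := by
    apply intervalIntegral.integral_mono_on (by norm_num)
    · apply Continuous.intervalIntegrable
      exact continuous_finset_sum _ (fun σ _ =>
        (continuous_pow _).mul ((continuous_const.sub continuous_id).pow _))
    · exact intervalIntegrable_const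
    · intro x hx
      exact bern m x hx.1 hx.2
  rw [intervalIntegral.integral_const] at hmono
  calc (∫ x in (0:ℝ)..1, ∑ σ : Equiv.Perm (Fin (m+1)), x ^ dsc σ * (1-x) ^ (m - dsc σ))
      ≤ (1 - 0 : ℝ) • (((m+1).factorial : ℝ) / 2 ^ m) := hmono
    _ = ((m+1).factorial : ℝ) / 2 ^ m := by simp

set_option maxHeartbeats 1600000 in
/-- Bound on the sum of the absolute values of the coefficients of the degree-`k` term of the
Chen–Strichartz expansion: `∑_{σ ∈ S_k} 1/(k² C(k-1, e(σ))) ≤ C 2^{-k} k! √k`,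
where `e(σ)` is the number of descents of `σ` (here `k = m+1 ≥ 1`). -/
theorem stmt_12 :
    ∃ C : ℝ, 0 < C ∧ ∀ m : ℕ,
      ∑ σ : Equiv.Perm (Fin (m+1)),
          (1 : ℝ) / ((m+1 : ℝ)^2 *
            (Nat.choose m (univ.filter (fun j : Fin m => σ j.succ < σ j.castSucc)).card : ℝ))
        ≤ C / 2 ^ (m+1) * ((m+1).factorial : ℝ) * Real.sqrt (m+1) := by
  refine ⟨2, by norm_num, fun m => ?_⟩
  classical
  have hterm : ∀ σ : Equiv.Perm (Fin (m+1)),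
      (1 : ℝ) / ((m+1 : ℝ)^2 *
          (Nat.choose m (univ.filter (fun j : Fin m => σ j.succ < σ j.castSucc)).card : ℝ))
        = (1/(m+1 : ℝ)) * ∫ x in (0:ℝ)..1, x ^ dsc σ * (1-x) ^ (m - dsc σ) := by
    intro σ
    have hd : (univ.filter (fun j : Fin m => σ j.succ < σ j.castSucc)).card = dsc σ := rfl
    rw [hd, beta_int]
    have hdm : dsc σ + (m - dsc σ) = m := by have := dsc_le σ; omega
    rw [hdm]
    have hch := Nat.choose_mul_factorial_mul_factorial (dsc_le σ)
    have hch' : ((m.choose (dsc σ) : ℝ)) * (dsc σ).factorial * (m - dsc σ).factorial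
        = m.factorial := by exact_mod_cast congrArg (fun x : ℕ => (x : ℝ)) hch
    have hfact : ((m+1).factorial : ℝ) = (m+1) * m.factorial := by
      rw [Nat.factorial_succ]; push_cast; ring
    have hchpos : (0:ℝ) < (m.choose (dsc σ) : ℝ) := by
      exact_mod_cast Nat.choose_pos (dsc_le σ)
    have hmf : (0:ℝ) < (m.factorial : ℝ) := by exact_mod_cast Nat.factorial_pos m
    rw [hfact]
    have hkey : (1:ℝ)/(((m:ℝ)+1)^2 * (m.choose (dsc σ) : ℝ))
        = ((dsc σ).factorial * (m - dsc σ).factorial : ℝ)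
          / (((m:ℝ)+1) * (((m:ℝ)+1) * (m.factorial : ℝ))) := by
      rw [div_eq_div_iff (by positivity) (by positivity)]
      linear_combination (-(((m:ℝ)+1)^2)) * hch'
    rw [hkey]
    field_simp
  rw [Finset.sum_congr rfl (fun σ _ => hterm σ), ← Finset.mul_sum]
  have h2 : (1/(m+1:ℝ)) * (∑ σ : Equiv.Perm (Fin (m+1)),
        ∫ x in (0:ℝ)..1, x ^ dsc σ * (1-x) ^ (m - dsc σ))
      ≤ (1/(m+1:ℝ)) * (((m+1).factorial : ℝ) / 2 ^ m) :=
    mul_le_mul_of_nonneg_left (sum_integral_bound m) (by positivity)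
  refine le_trans h2 ?_
  have hsqrt : (1:ℝ) ≤ Real.sqrt (m+1) := by
    have h : (1:ℝ) ≤ (m:ℝ)+1 := by
      have := Nat.cast_nonneg (α := ℝ) m
      linarith
    calc (1:ℝ) = Real.sqrt 1 := by simp
      _ ≤ Real.sqrt (m+1) := Real.sqrt_le_sqrt h
  have hstep : (1/(m+1:ℝ)) * (((m+1).factorial : ℝ) / 2 ^ m)
      ≤ ((m+1).factorial : ℝ) / 2 ^ m := by
    apply mul_le_of_le_one_left (by positivity)
    rw [div_le_one (by positivity)]
    push_cast; linarith
  refine le_trans hstep ?_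
  have : (2:ℝ) / 2 ^ (m+1) * ((m+1).factorial : ℝ) * Real.sqrt (m+1)
      = (((m+1).factorial : ℝ) / 2 ^ m) * Real.sqrt (m+1) := by
    rw [pow_succ]
    ring
  rw [this]
  nth_rewrite 1 [← mul_one (((m+1).factorial : ℝ) / 2 ^ m)]
  apply mul_le_mul_of_nonneg_left hsqrt (by positivity)
end
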